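/- arXiv:0709.3275 — 8 statements merged into one kernel-verified Lean document; each statement's English description precedes it below -/
import Mathlib

section
/- Let q ∈ ℂ with 0 < |q| < 1 and let a, b, c ∈ ℂ* with c·qⁿ ≠ 1 for every integer n ≥ 0. Define φ(z) = Σ_{n=0}^∞ ((a;q)_n (b;q)_n)/((c;q)_n (q;q)_n) zⁿ for |z| < 1. Then for every z ∈ ℂ with |z| < 1 and abz ≠ c/q, one has φ(q²z) − (((a+b)z − (1 + c/q))/(abz − c/q))·φ(qz) + ((z − 1)/(abz − c/q))·φ(z) = 0. -/
open Filter Topology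

/-- The finite q-Pochhammer symbol `(x; q)_n = ∏_{k=0}^{n-1} (1 - x qᵏ)`. -/
noncomputable def qPoch (q x : ℂ) (n : ℕ) : ℂ :=
  ∏ k ∈ Finset.range n, (1 - x * q ^ k)

/-- The basic hypergeometric series `₂φ₁(a,b;c;q;z)`. -/
noncomputable def basicHypergeometric (q a b c z : ℂ) : ℂ :=
  ∑' n : ℕ, qPoch q a n * qPoch q b n / (qPoch q c n * qPoch q q n) * z ^ n

lemma qPoch_succ (q x : ℂ) (n : ℕ) :
    qPoch q x (n + 1) = qPoch q x n * (1 - x * q ^ n) :=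
  Finset.prod_range_succ _ _

/-- `₂φ₁(a,b;c;q;·)` satisfies the basic hypergeometric equation with parameters `(a,b,c)`. -/
theorem basic_hypergeometric_series_solves_basic_hypergeometric_equation
    (q : ℂ) (hq0 : 0 < ‖q‖) (hq1 : ‖q‖ < 1)
    (a b c : ℂ) (ha : a ≠ 0) (hb : b ≠ 0) (hc0 : c ≠ 0)
    (hc : ∀ n : ℕ, c * q ^ n ≠ 1)
    (z : ℂ) (hz : ‖z‖ < 1) (hz' : a * b * z ≠ c / q) :
    basicHypergeometric q a b c (q ^ 2 * z)
      - ((a + b) * z - (1 + c / q)) / (a * b * z - c / q) * basicHypergeometric q a b c (q * z)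
      + (z - 1) / (a * b * z - c / q) * basicHypergeometric q a b c z = 0 := by
  have hqne : q ≠ 0 := by
    intro h; simp [h] at hq0
  set t : ℕ → ℂ := fun n => qPoch q a n * qPoch q b n / (qPoch q c n * qPoch q q n) with ht
  have hBH : ∀ w : ℂ, basicHypergeometric q a b c w = ∑' n, t n * w ^ n := fun w => rfl
  have habsq : ∀ m : ℕ, m ≠ 0 → ‖q ^ m‖ < 1 := by
    intro m hm
    rw [norm_pow]
    exact pow_lt_one₀ (norm_nonneg q) hq1 hm
  have hCne : ∀ n, qPoch q c n ≠ 0 := by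
    intro n
    apply Finset.prod_ne_zero_iff.2
    intro k _
    exact sub_ne_zero.2 (Ne.symm (hc k))
  have hQne : ∀ n, qPoch q q n ≠ 0 := by
    intro n
    apply Finset.prod_ne_zero_iff.2
    intro k _
    apply sub_ne_zero.2
    intro h
    have h2 : ‖q * q ^ k‖ < 1 := by
      rw [← pow_succ']; exact habsq (k+1) (Nat.succ_ne_zero k)
    rw [← h] at h2; simp at h2
  have h1mc : ∀ n : ℕ, (1 : ℂ) - c * q ^ n ≠ 0 := fun n => sub_ne_zero.2 (Ne.symm (hc n))
  have h1mq : ∀ n : ℕ, (1 : ℂ) - q ^ (n+1) ≠ 0 := by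
    intro n
    apply sub_ne_zero.2
    intro h
    have h2 := habsq (n+1) (Nat.succ_ne_zero n)
    rw [← h] at h2; simp at h2
  have e1 : ∀ n : ℕ, (c / q) * q ^ (n+1) = c * q ^ n := by
    intro n
    field_simp
    ring
  have h1md : ∀ n : ℕ, (1 : ℂ) - (c/q) * q ^ (n+1) ≠ 0 := by
    intro n; rw [e1 n]; exact h1mc n
  -- the key coefficient recurrence
  have hrec : ∀ n : ℕ, t (n+1) * ((1 - q ^ (n+1)) * (1 - (c/q) * q ^ (n+1)))
      = t n * ((1 - a * q ^ n) * (1 - b * q ^ n)) := by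
    intro n
    rw [e1 n, ht]
    simp only [qPoch_succ]
    have k1 := hCne n
    have k2 := hQne n
    have k3 := h1mc n
    have k4 : (1 : ℂ) - q * q ^ n ≠ 0 := by
      have := h1mq n; rwa [pow_succ'] at this
    rw [pow_succ']
    rw [div_mul_eq_mul_div, div_mul_eq_mul_div,
      div_eq_div_iff (mul_ne_zero (mul_ne_zero k1 k3) (mul_ne_zero k2 k4)) (mul_ne_zero k1 k2)]
    ring
  -- summability of the power series at any point of the unit disc
  have hsum : ∀ w : ℂ, ‖w‖ < 1 → Summable (fun n => t n * w ^ n) := by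
    intro w hw
    have hwn : 0 ≤ ‖w‖ := norm_nonneg w
    have hr1 : (‖w‖ + 1) / 2 < 1 := by linarith
    apply summable_of_ratio_norm_eventually_le hr1
    have hq0' : Filter.Tendsto (fun n : ℕ => q ^ n) Filter.atTop (𝓝 0) := by
      apply tendsto_pow_atTop_nhds_zero_of_norm_lt_one
      simpa using hq1
    have tq1 : Filter.Tendsto (fun n : ℕ => q ^ (n+1)) Filter.atTop (𝓝 0) := by
      have := hq0'.mul_const q
      simpa [pow_succ] using this
    set g : ℕ → ℂ := fun n =>
      (1 - a * q ^ n) * (1 - b * q ^ n) / ((1 - q ^ (n+1)) * (1 - (c/q) * q ^ (n+1))) with hgdef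
    have hgl : Filter.Tendsto g Filter.atTop (𝓝 1) := by
      have t1 : Filter.Tendsto (fun n : ℕ => a * q ^ n) Filter.atTop (𝓝 0) := by
        simpa using hq0'.const_mul a
      have t2 : Filter.Tendsto (fun n : ℕ => b * q ^ n) Filter.atTop (𝓝 0) := by
        simpa using hq0'.const_mul b
      have t3 : Filter.Tendsto (fun n : ℕ => (c/q) * q ^ (n+1)) Filter.atTop (𝓝 0) := by
        simpa using tq1.const_mul (c/q)
      have tnum : Filter.Tendsto (fun n : ℕ => (1 - a * q ^ n) * (1 - b * q ^ n))
          Filter.atTop (𝓝 1) := by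
        have := (tendsto_const_nhds (x := (1:ℂ)) (f := Filter.atTop (α := ℕ))).sub t1
        have h2' := (tendsto_const_nhds (x := (1:ℂ)) (f := Filter.atTop (α := ℕ))).sub t2
        simpa using this.mul h2'
      have tden : Filter.Tendsto (fun n : ℕ => (1 - q ^ (n+1)) * (1 - (c/q) * q ^ (n+1)))
          Filter.atTop (𝓝 1) := by
        have := (tendsto_const_nhds (x := (1:ℂ)) (f := Filter.atTop (α := ℕ))).sub tq1
        have h2' := (tendsto_const_nhds (x := (1:ℂ)) (f := Filter.atTop (α := ℕ))).sub t3
        simpa using this.mul h2'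
      simpa [hgdef, Pi.div_def] using tnum.div tden one_ne_zero
    have hwg : Filter.Tendsto (fun n => ‖w * g n‖) Filter.atTop (𝓝 ‖w‖) := by
      have := ((tendsto_const_nhds (x := w) (f := Filter.atTop (α := ℕ))).mul hgl).norm
      simpa using this
    have hev : ∀ᶠ n in Filter.atTop, ‖w * g n‖ < (‖w‖ + 1) / 2 := by
      apply hwg.eventually_lt_const
      linarith
    filter_upwards [hev] with n hn
    have hDne : ((1 : ℂ) - q ^ (n+1)) * (1 - (c/q) * q ^ (n+1)) ≠ 0 :=
      mul_ne_zero (h1mq n) (h1md n)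
    have h2 : t (n+1) = t n * ((1 - a * q ^ n) * (1 - b * q ^ n))
        / ((1 - q ^ (n+1)) * (1 - (c/q) * q ^ (n+1))) := by
      rw [eq_div_iff hDne]
      linear_combination hrec n
    have h3 : t (n+1) * w ^ (n+1) = (w * g n) * (t n * w ^ n) := by
      rw [h2, hgdef]
      ring
    rw [h3, norm_mul]
    exact mul_le_mul_of_nonneg_right (le_of_lt hn) (norm_nonneg _)
  -- summability at the three points
  have hz1 : ‖q ^ 2 * z‖ < 1 := by
    rw [norm_mul, norm_pow]
    nlinarith [norm_nonneg q, norm_nonneg z]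
  have hz2 : ‖q * z‖ < 1 := by
    rw [norm_mul]
    nlinarith [norm_nonneg q, norm_nonneg z]
  have h1 := hsum _ hz1
  have h2 := hsum _ hz2
  have h3 := hsum z hz
  set P : ℕ → ℂ := fun n => a*b*z*(t n*(q^2*z)^n) - (a+b)*z*(t n*(q*z)^n) + z*(t n*z^n)
    with hPdef
  set Q : ℕ → ℂ := fun n => -(c/q)*(t n*(q^2*z)^n) + (1+c/q)*(t n*(q*z)^n) - t n*z^n
    with hQdef
  have hPsum : Summable P := ((h1.mul_left _).sub (h2.mul_left _)).add (h3.mul_left _)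
  have hQsum : Summable Q := ((h1.mul_left (-(c/q))).add (h2.mul_left (1+c/q))).sub h3
  have hkey : ∀ n, Q (n+1) = - P n := by
    intro n
    simp only [hPdef, hQdef]
    linear_combination (-(z^(n+1))) * hrec n
  have hQ0 : Q 0 = 0 := by
    simp only [hQdef, ht, qPoch]
    simp
  have hQP : ∑' n, Q n = - ∑' n, P n := by
    rw [hQsum.tsum_eq_zero_add, hQ0, zero_add]
    rw [tsum_congr hkey, tsum_neg]
  have eP : ∑' n, P n = a*b*z*(∑' n, t n*(q^2*z)^n) - (a+b)*z*(∑' n, t n*(q*z)^n)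
      + z*(∑' n, t n*z^n) := by
    simp only [hPdef]
    rw [Summable.tsum_add ((h1.mul_left _).sub (h2.mul_left _)) (h3.mul_left _),
      Summable.tsum_sub (h1.mul_left _) (h2.mul_left _), tsum_mul_left, tsum_mul_left, tsum_mul_left]
  have eQ : ∑' n, Q n = -(c/q)*(∑' n, t n*(q^2*z)^n) + (1+c/q)*(∑' n, t n*(q*z)^n)
      - (∑' n, t n*z^n) := by
    simp only [hQdef]
    rw [Summable.tsum_sub ((h1.mul_left (-(c/q))).add (h2.mul_left (1+c/q))) h3,
      Summable.tsum_add (h1.mul_left (-(c/q))) (h2.mul_left (1+c/q)), tsum_mul_left, tsum_mul_left]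
  have hfinal : (a*b*z - c/q)*(∑' n, t n*(q^2*z)^n)
      - ((a+b)*z - (1+c/q))*(∑' n, t n*(q*z)^n) + (z-1)*(∑' n, t n*z^n) = 0 := by
    linear_combination -eP - eQ + hQP
  have hD : a*b*z - c/q ≠ 0 := sub_ne_zero.2 hz'
  have hD' : a*b*z*q - c ≠ 0 := by
    intro h
    apply hD
    have hh : a*b*z - c/q = (a*b*z*q - c)/q := by field_simp
    rw [hh, h, zero_div]
  have expand : ∀ X Y Z : ℂ, X - ((a+b)*z - (1+c/q))/(a*b*z - c/q)*Y + (z-1)/(a*b*z - c/q)*Z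
      = ((a*b*z - c/q)*X - ((a+b)*z - (1+c/q))*Y + (z-1)*Z)/(a*b*z - c/q) := by
    intro X Y Z
    field_simp
  rw [hBH, hBH, hBH, expand, hfinal, zero_div]
end

section
/- Let q ∈ ℂ with 0 < |q| < 1 and let θ_q be the Jacobi theta function. Then the set of zeros of θ_q in ℂ∖{0} is exactly the discrete logarithmic spiral q^ℤ = {qⁿ : n ∈ ℤ}, and every such zero is simple (i.e., θ_q(qⁿ) = 0 and θ_q'(qⁿ) ≠ 0 for every n ∈ ℤ, and θ_q(z) ≠ 0 for z ∉ q^ℤ). -/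
/-- The infinite q-Pochhammer symbol `(x; q)_∞ = ∏_{k=0}^{∞} (1 - x qᵏ)`. -/
noncomputable def qPochInf (q x : ℂ) : ℂ :=
  ∏' k : ℕ, (1 - x * q ^ k)

/-- The Jacobi theta function `θ_q(z) = (q;q)_∞ (z;q)_∞ (q/z;q)_∞`. -/
noncomputable def thetaQ (q z : ℂ) : ℂ :=
  qPochInf q q * qPochInf q z * qPochInf q (q / z)

namespace ThetaAux

open Complex Filter Finset Topology

variable {q : ℂ}

lemma summable_norm_geom (x : ℂ) (hq1 : ‖q‖ < 1) :
    Summable (fun k : ℕ => ‖x * q ^ k‖) := by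
  have : Summable (fun k : ℕ => ‖q‖ ^ k) :=
    summable_geometric_of_lt_one (norm_nonneg q) hq1
  simpa [norm_mul, norm_pow] using this.mul_left ‖x‖

lemma summable_log (x : ℂ) (hq1 : ‖q‖ < 1) (h : ∀ k : ℕ, 1 - x * q ^ k ≠ 0) :
    Summable (fun k : ℕ => Complex.log (1 - x * q ^ k)) := by
  have hg : Summable (fun k : ℕ => (3/2 : ℝ) * ‖x * q ^ k‖) :=
    (summable_norm_geom x hq1).mul_left _
  refine Summable.of_norm_bounded_eventually_nat hg ?_
  have hx : Tendsto (fun k : ℕ => ‖x * q ^ k‖) atTop (𝓝 0) := by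
    have : Tendsto (fun k : ℕ => ‖q‖ ^ k) atTop (𝓝 0) :=
      tendsto_pow_atTop_nhds_zero_of_lt_one (norm_nonneg q) hq1
    have := this.const_mul ‖x‖
    simpa [norm_mul, norm_pow] using this
  filter_upwards [hx.eventually (ge_mem_nhds (by norm_num : (0:ℝ) < 1/2))] with k hk
  have h2 : ‖-(x * q ^ k)‖ ≤ 1/2 := by simpa using hk
  have := Complex.norm_log_one_add_half_le_self h2
  simpa [sub_eq_add_neg] using this

lemma hasProd_of_ne (x : ℂ) (hq1 : ‖q‖ < 1) (h : ∀ k : ℕ, 1 - x * q ^ k ≠ 0) :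
    HasProd (fun k : ℕ => 1 - x * q ^ k)
      (Complex.exp (∑' k : ℕ, Complex.log (1 - x * q ^ k))) := by
  have h1 := (summable_log x hq1 h).hasSum.cexp
  have h2 : (cexp ∘ fun k : ℕ => Complex.log (1 - x * q ^ k))
      = fun k : ℕ => 1 - x * q ^ k :=
    funext fun k => Complex.exp_log (h k)
  rwa [h2] at h1

lemma hasProd_zero {x : ℂ} {k₀ : ℕ} (hk : 1 - x * q ^ k₀ = 0) :
    HasProd (fun k : ℕ => 1 - x * q ^ k) 0 := by
  have hev : ∀ᶠ s : Finset ℕ in atTop, ∏ i ∈ s, (1 - x * q ^ i) = 0 := by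
    filter_upwards [eventually_ge_atTop ({k₀} : Finset ℕ)] with s hs
    exact Finset.prod_eq_zero (hs (Finset.mem_singleton_self k₀)) hk
  exact Tendsto.congr' (hev.mono fun s hs => hs.symm) tendsto_const_nhds

lemma mult_aux (x : ℂ) (hq1 : ‖q‖ < 1) :
    Multipliable (fun k : ℕ => 1 - x * q ^ k) := by
  by_cases h : ∀ k : ℕ, 1 - x * q ^ k ≠ 0
  · exact ⟨_, hasProd_of_ne x hq1 h⟩
  · push_neg at h
    obtain ⟨k₀, hk⟩ := h
    exact ⟨0, hasProd_zero hk⟩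

lemma qPochInf_ne_zero (x : ℂ) (hq1 : ‖q‖ < 1) (h : ∀ k : ℕ, x * q ^ k ≠ 1) :
    qPochInf q x ≠ 0 := by
  have h' : ∀ k : ℕ, 1 - x * q ^ k ≠ 0 := fun k => sub_ne_zero.mpr (h k).symm
  rw [qPochInf, (hasProd_of_ne x hq1 h').tprod_eq]
  exact Complex.exp_ne_zero _

lemma qPochInf_eq_zero {x : ℂ} {k₀ : ℕ} (hk : x * q ^ k₀ = 1) :
    qPochInf q x = 0 :=
  (hasProd_zero (by rw [hk]; ring)).tprod_eq

lemma qPochInf_split (x : ℂ) (hq1 : ‖q‖ < 1) (m : ℕ) :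
    qPochInf q x = (∏ k ∈ range m, (1 - x * q ^ k)) * qPochInf q (x * q ^ m) := by
  have h1 : HasProd (fun k : ℕ => 1 - (x * q ^ m) * q ^ k) (qPochInf q (x * q ^ m)) :=
    (mult_aux (x * q ^ m) hq1).hasProd
  have heq : (fun k : ℕ => 1 - x * q ^ (k + m)) = fun k : ℕ => 1 - (x * q ^ m) * q ^ k := by
    funext k; rw [pow_add]; ring
  have h2 : HasProd (fun k : ℕ => 1 - x * q ^ (k + m)) (qPochInf q (x * q ^ m)) := by
    rw [heq]; exact h1
  have h3 : HasProd (fun k : ℕ => 1 - x * q ^ k)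
      ((∏ i ∈ range m, (1 - x * q ^ i)) * qPochInf q (x * q ^ m)) :=
    HasProd.prod_range_mul (f := fun k : ℕ => 1 - x * q ^ k) (k := m) h2
  rw [qPochInf]
  exact h3.tprod_eq

lemma differentiable_qPochInf (hq1 : ‖q‖ < 1) : Differentiable ℂ (qPochInf q) := by
  have key : ∀ R : ℝ, 0 < R → DifferentiableOn ℂ (qPochInf q) (Metric.ball 0 R) := by
    intro R hR
    set F : ℕ → ℂ → ℂ := fun n x => ∏ k ∈ range n, (1 - x * q ^ k) with hF
    set g : ℕ → ℂ → ℂ := fun k x => F k x * (-(x * q ^ k)) with hg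
    set C : ℝ := Real.exp (R * (1 - ‖q‖)⁻¹) with hCdef
    have hqnn : (0:ℝ) ≤ ‖q‖ := norm_nonneg q
    have hC : ∀ (k : ℕ) (x : ℂ), x ∈ Metric.ball (0:ℂ) R → ‖F k x‖ ≤ C := by
      intro k x hx
      rw [Metric.mem_ball, dist_zero_right] at hx
      calc ‖F k x‖ ≤ ∏ j ∈ range k, ‖1 - x * q ^ j‖ := norm_prod_le _ _
        _ ≤ ∏ j ∈ range k, Real.exp (R * ‖q‖ ^ j) := by
            apply Finset.prod_le_prod (fun _ _ => norm_nonneg _)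
            intro j _
            calc ‖1 - x * q ^ j‖ ≤ ‖(1:ℂ)‖ + ‖x * q ^ j‖ := norm_sub_le _ _
              _ = 1 + ‖x‖ * ‖q‖ ^ j := by rw [norm_one, norm_mul, norm_pow]
              _ ≤ 1 + R * ‖q‖ ^ j := by
                  have : ‖x‖ * ‖q‖ ^ j ≤ R * ‖q‖ ^ j :=
                    mul_le_mul_of_nonneg_right hx.le (pow_nonneg hqnn j)
                  linarith
              _ ≤ Real.exp (R * ‖q‖ ^ j) := by
                  have := Real.add_one_le_exp (R * ‖q‖ ^ j)
                  linarith
        _ = Real.exp (∑ j ∈ range k, R * ‖q‖ ^ j) := by rw [Real.exp_sum]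
        _ ≤ C := by
            rw [hCdef]
            apply Real.exp_le_exp.mpr
            rw [← Finset.mul_sum]
            apply mul_le_mul_of_nonneg_left _ hR.le
            have hsum : ∑ j ∈ range k, ‖q‖ ^ j ≤ ∑' j : ℕ, ‖q‖ ^ j :=
              Summable.sum_le_tsum _ (fun i _ => pow_nonneg hqnn i)
                (summable_geometric_of_lt_one hqnn hq1)
            rwa [tsum_geometric_of_lt_one hqnn hq1] at hsum
    set u : ℕ → ℝ := fun k => C * (R * ‖q‖ ^ k) with hu
    have hsu : Summable u :=
      ((summable_geometric_of_lt_one hqnn hq1).mul_left R).mul_left C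
    have hgu : ∀ (k : ℕ) (x : ℂ), x ∈ Metric.ball (0:ℂ) R → ‖g k x‖ ≤ u k := by
      intro k x hx
      have hx' : ‖x‖ < R := by rwa [Metric.mem_ball, dist_zero_right] at hx
      rw [hg]
      simp only [norm_mul, norm_neg, norm_pow]
      apply mul_le_mul (hC k x hx) ?_ (by positivity) (Real.exp_pos _).le
      exact mul_le_mul_of_nonneg_right hx'.le (pow_nonneg hqnn k)
    have h0 : TendstoUniformlyOn (fun n x => ∑ k ∈ range n, g k x)
        (fun x => ∑' k : ℕ, g k x) atTop (Metric.ball 0 R) :=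
      tendstoUniformlyOn_tsum_nat hsu hgu
    have h1 : TendstoUniformlyOn (fun n x => (1:ℂ) + ∑ k ∈ range n, g k x)
        (fun x => (1:ℂ) + ∑' k : ℕ, g k x) atTop (Metric.ball 0 R) :=
      ((tendsto_const_nhds (x := (1:ℂ))).tendstoUniformlyOn_const _).add h0
    have htel : ∀ (n : ℕ) (x : ℂ), F n x = 1 + ∑ k ∈ range n, g k x := by
      intro n x
      have : ∀ k : ℕ, g k x = F (k+1) x - F k x := by
        intro k
        rw [hg, hF]
        simp only
        rw [Finset.prod_range_succ]
        ring
      rw [Finset.sum_congr rfl fun k _ => this k, Finset.sum_range_sub (fun k => F k x)]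
      simp [hF]
    have h2 : TendstoUniformlyOn F (fun x => (1:ℂ) + ∑' k : ℕ, g k x)
        atTop (Metric.ball 0 R) := by
      apply h1.congr
      filter_upwards with n x _
      exact (htel n x).symm
    have h3 : TendstoUniformlyOn F (qPochInf q) atTop (Metric.ball 0 R) := by
      apply h2.congr_right
      intro x hx
      have hp : Tendsto (fun n => F n x) atTop (𝓝 (qPochInf q x)) :=
        (mult_aux x hq1).hasProd.tendsto_prod_nat
      have hp' : Tendsto (fun n => F n x) atTop (𝓝 ((1:ℂ) + ∑' k : ℕ, g k x)) :=
        h2.tendsto_at hx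
      exact tendsto_nhds_unique hp' hp
    have hFd : ∀ n : ℕ, DifferentiableOn ℂ (F n) (Metric.ball 0 R) := by
      intro n
      apply Differentiable.differentiableOn
      apply Differentiable.fun_finsetProd
      intro k _
      exact (differentiable_const (1:ℂ)).sub (differentiable_id.mul_const _)
    exact h3.tendstoLocallyUniformlyOn.differentiableOn
      (Filter.Eventually.of_forall hFd) Metric.isOpen_ball
  intro x
  have hball : x ∈ Metric.ball (0:ℂ) (‖x‖ + 1) := by
    rw [Metric.mem_ball, dist_zero_right]; linarith
  exact (key (‖x‖ + 1) (by positivity)).differentiableAt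
    (Metric.isOpen_ball.mem_nhds hball)

end ThetaAux

open Complex Filter Finset Topology ThetaAux in
/-- The zeros of `θ_q` in `ℂ ∖ {0}` are exactly the points of the logarithmic spiral
`q^ℤ`, and each of these zeros is simple. -/
theorem thetaQ_zeros
    (q : ℂ) (hq0 : 0 < ‖q‖) (hq1 : ‖q‖ < 1) :
    (∀ n : ℤ, thetaQ q (q ^ n) = 0 ∧ deriv (thetaQ q) (q ^ n) ≠ 0) ∧
      (∀ z : ℂ, z ≠ 0 → (∀ n : ℤ, z ≠ q ^ n) → thetaQ q z ≠ 0) := by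
  have hq1' : ‖q‖ < 1 := hq1
  have hq : q ≠ 0 := by
    intro h; rw [h] at hq0; simp at hq0
  have hq0' : (0:ℝ) < ‖q‖ := hq0
  -- q ^ a ≠ 1 for nonzero integers a
  have hone : ∀ a : ℤ, a ≠ 0 → (q : ℂ) ^ a ≠ 1 := by
    intro a ha h
    apply ha
    have h2 : ‖q‖ ^ a = ‖q‖ ^ (0 : ℤ) := by
      rw [← norm_zpow, h, norm_one, zpow_zero]
    exact zpow_right_injective₀ hq0 (ne_of_lt hq1) h2
  have hone' : ∀ j : ℕ, j ≠ 0 → (q : ℂ) ^ j ≠ 1 := by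
    intro j hj h
    exact hone (j : ℤ) (by exact_mod_cast hj) (by rwa [zpow_natCast])
  -- nonvanishing of P at arguments q^(j+1)
  have hPpow : ∀ j : ℕ, qPochInf q (q ^ (j + 1)) ≠ 0 := by
    intro j
    apply qPochInf_ne_zero _ hq1'
    intro k
    rw [← pow_add]
    exact hone' (j + 1 + k) (by omega)
  have hPq : qPochInf q q ≠ 0 := by
    have := hPpow 0
    rwa [pow_one] at this
  -- key facts about x₀ := q^(-m)
  have hx0m : ∀ m : ℕ, q ^ (-(m:ℤ)) * q ^ m = 1 := by
    intro m
    rw [← zpow_natCast q m, ← zpow_add₀ hq]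
    simp
  have hx0k : ∀ m k : ℕ, k < m → 1 - q ^ (-(m:ℤ)) * q ^ k ≠ 0 := by
    intro m k hk
    have h1 : q ^ (-(m:ℤ)) * q ^ k = q ^ ((k:ℤ) - m) := by
      rw [← zpow_natCast q k, ← zpow_add₀ hq]
      congr 1; ring
    rw [h1]
    exact sub_ne_zero.mpr (Ne.symm (hone _ (by omega)))
  have hx0q : ∀ m : ℕ, q ^ (-(m:ℤ)) * q ^ (m + 1) = q := by
    intro m
    rw [← zpow_natCast q (m+1), ← zpow_add₀ hq]
    have : -(m:ℤ) + ((m:ℕ)+1 : ℕ) = 1 := by push_cast; ring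
    rw [this, zpow_one]
  have hPdiff : Differentiable ℂ (qPochInf q) := differentiable_qPochInf hq1'
  constructor
  · intro n
    rcases le_or_gt n 0 with hn | hn
    · -- z₀ = q^n = q^(-m)
      obtain ⟨m, rfl⟩ : ∃ m : ℕ, n = -(m : ℤ) := ⟨(-n).toNat, by omega⟩
      set z₀ : ℂ := q ^ (-(m:ℤ)) with hz₀def
      have hz₀ne : z₀ ≠ 0 := zpow_ne_zero _ hq
      have hfac : 1 - z₀ * q ^ m = 0 := by rw [hz₀def, hx0m]; ring
      have hqz : q / z₀ = q ^ (m + 1) := by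
        rw [div_eq_iff hz₀ne, hz₀def, mul_comm, hx0q]
      constructor
      · rw [thetaQ, qPochInf_eq_zero (x := z₀) (k₀ := m) (by rw [hz₀def, hx0m]),
          mul_zero, zero_mul]
      · -- function identity
        have hfun : thetaQ q = fun z => (1 - z * q ^ m) *
            (qPochInf q q * ((∏ k ∈ range m, (1 - z * q ^ k)) *
              qPochInf q (z * q ^ (m + 1)) * qPochInf q (q / z))) := by
          funext z
          rw [thetaQ, qPochInf_split (q := q) z hq1' (m + 1), prod_range_succ]
          ring
        set H : ℂ → ℂ := fun z => qPochInf q q * ((∏ k ∈ range m, (1 - z * q ^ k)) *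
              qPochInf q (z * q ^ (m + 1)) * qPochInf q (q / z)) with hHdef
        have hHdiff : DifferentiableAt ℂ H z₀ := by
          apply DifferentiableAt.const_mul
          apply DifferentiableAt.mul
          apply DifferentiableAt.mul
          · exact DifferentiableAt.fun_finsetProd fun k _ =>
              (differentiableAt_const _).sub (differentiableAt_id.mul_const _)
          · exact (hPdiff _).comp z₀ (differentiableAt_id.mul_const _)
          · exact (hPdiff _).comp z₀
              ((differentiableAt_const q).div differentiableAt_id hz₀ne)
        have hfdiff : DifferentiableAt ℂ (fun z : ℂ => 1 - z * q ^ m) z₀ :=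
          (differentiableAt_const _).sub (differentiableAt_id.mul_const _)
        have hderivf : deriv (fun z : ℂ => 1 - z * q ^ m) z₀ = -q ^ m := by
          simp [deriv_const_sub]
        have hH0 : H z₀ ≠ 0 := by
          rw [hHdef]
          apply mul_ne_zero hPq
          apply mul_ne_zero
          apply mul_ne_zero
          · rw [Finset.prod_ne_zero_iff]
            intro k hk
            exact hx0k m k (Finset.mem_range.mp hk)
          · rw [hz₀def, hx0q]; exact hPq
          · rw [hqz]; exact hPpow m
        rw [hfun, deriv_fun_mul hfdiff hHdiff, hderivf, hfac, zero_mul, add_zero]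
        exact mul_ne_zero (neg_ne_zero.mpr (pow_ne_zero _ hq)) hH0
    · -- z₀ = q^n = q^(m+1)
      obtain ⟨m, rfl⟩ : ∃ m : ℕ, n = (m : ℤ) + 1 := ⟨(n - 1).toNat, by omega⟩
      have hzn : q ^ ((m : ℤ) + 1) = q ^ (m + 1 : ℕ) := by
        rw [← zpow_natCast q (m+1)]; push_cast; ring_nf
      rw [hzn]
      set z₀ : ℂ := q ^ (m + 1 : ℕ) with hz₀def
      have hz₀ne : z₀ ≠ 0 := pow_ne_zero _ hq
      have hdiv : q / z₀ = q ^ (-(m:ℤ)) := by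
        rw [div_eq_iff hz₀ne, hz₀def, hx0q]
      have hfac : 1 - q ^ (m+1) * z₀⁻¹ = 0 := by
        rw [hz₀def, mul_inv_cancel₀ (pow_ne_zero _ hq), sub_self]
      constructor
      · rw [thetaQ, qPochInf_eq_zero (x := q / z₀) (k₀ := m) (by rw [hdiv, hx0m]),
          mul_zero]
      · have hfun : thetaQ q = fun z => (1 - q ^ (m+1) * z⁻¹) *
            (qPochInf q q * (qPochInf q z * ((∏ k ∈ range m, (1 - (q / z) * q ^ k)) *
              qPochInf q ((q / z) * q ^ (m + 1))))) := by
          funext z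
          rw [thetaQ, qPochInf_split (q := q) (q / z) hq1' (m + 1), prod_range_succ]
          have : (q / z) * q ^ m = q ^ (m+1) * z⁻¹ := by
            rw [div_eq_mul_inv, pow_succ]; ring
          rw [this]
          ring
        set H : ℂ → ℂ := fun z => qPochInf q q * (qPochInf q z *
            ((∏ k ∈ range m, (1 - (q / z) * q ^ k)) *
              qPochInf q ((q / z) * q ^ (m + 1)))) with hHdef
        have hdz : DifferentiableAt ℂ (fun z : ℂ => q / z) z₀ :=
          (differentiableAt_const q).div differentiableAt_id hz₀ne
        have hHdiff : DifferentiableAt ℂ H z₀ := by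
          apply DifferentiableAt.const_mul
          apply DifferentiableAt.mul (hPdiff _)
          apply DifferentiableAt.mul
          · exact DifferentiableAt.fun_finsetProd fun k _ =>
              (differentiableAt_const _).sub (hdz.mul_const _)
          · exact (hPdiff _).comp z₀ (hdz.mul_const _)
        have hfdiff : DifferentiableAt ℂ (fun z : ℂ => 1 - q ^ (m+1) * z⁻¹) z₀ :=
          (differentiableAt_const _).sub ((differentiableAt_inv hz₀ne).const_mul _)
        have hderivf : deriv (fun z : ℂ => 1 - q ^ (m+1) * z⁻¹) z₀
            = q ^ (m+1) * (z₀ ^ 2)⁻¹ := by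
          rw [deriv_const_sub, deriv_const_mul _ (differentiableAt_inv hz₀ne), deriv_inv]
          ring
        have hH0 : H z₀ ≠ 0 := by
          rw [hHdef]
          apply mul_ne_zero hPq
          apply mul_ne_zero
          · rw [hz₀def]; exact hPpow m
          apply mul_ne_zero
          · rw [Finset.prod_ne_zero_iff]
            intro k hk
            rw [hdiv]
            exact hx0k m k (Finset.mem_range.mp hk)
          · rw [hdiv, hx0q]; exact hPq
        rw [hfun, deriv_fun_mul hfdiff hHdiff, hderivf, hfac, zero_mul, add_zero]
        exact mul_ne_zero
          (mul_ne_zero (pow_ne_zero _ hq) (inv_ne_zero (pow_ne_zero _ hz₀ne))) hH0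
  · intro z hz0 hz
    rw [thetaQ]
    apply mul_ne_zero
    apply mul_ne_zero hPq
    · apply qPochInf_ne_zero _ hq1'
      intro k hk
      apply hz (-(k:ℤ))
      rw [zpow_neg, zpow_natCast]
      exact eq_inv_of_mul_eq_one_left (by rw [mul_comm] at hk ⊢; exact hk)
    · apply qPochInf_ne_zero _ hq1'
      intro k hk
      apply hz ((k:ℤ) + 1)
      have h1 : q * q ^ k = z := by
        field_simp at hk
        exact hk
      have h2 : q ^ ((k:ℤ) + 1) = q * q ^ k := by
        rw [zpow_add₀ hq, zpow_natCast, zpow_one]; ring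
      rw [h2, h1]
end

section
/- Let q ∈ ℂ with 0 < |q| < 1 and let θ_q be the Jacobi theta function. Then for every z ∈ ℂ∖{0}, the family (q^{j(j−1)/2} (−z)^j)_{j ∈ ℤ} is absolutely summable and its sum equals θ_q(z); that is, θ_q(z) = Σ_{j∈ℤ} q^{j(j−1)/2} (−z)^j. -/
open Finset Filter Complex Topology

namespace JTP

lemma two_mul_choose (j : ℕ) : 2 * j.choose 2 = j * (j - 1) := by
  induction j with
  | zero => simp
  | succ n ih =>
    rw [Nat.choose_succ_succ, Nat.choose_one_right, Nat.mul_add, ih]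
    cases n with
    | zero => simp
    | succ m => simp [Nat.succ_sub_one]; ring

lemma zc (j : ℕ) : ((j.choose 2 : ℤ)) * 2 = (j : ℤ) * (j - 1) := by
  have := two_mul_choose j
  cases j with
  | zero => simp
  | succ m =>
    have h2 : ((2 * (m+1).choose 2 : ℕ) : ℤ) = (((m+1) * m : ℕ) : ℤ) := by
      rw [this]; simp
    push_cast at h2
    push_cast
    linarith

lemma ediv_nat (n : ℕ) : ((n : ℤ) * ((n:ℤ) - 1)) / 2 = (n.choose 2 : ℤ) := by
  rw [← zc n, Int.mul_ediv_cancel _ two_ne_zero]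

lemma ediv_neg (n : ℕ) : ((-n : ℤ) * ((-n:ℤ) - 1)) / 2 = ((n+1).choose 2 : ℤ) := by
  have := zc (n+1)
  have h : ((-n : ℤ) * ((-n:ℤ) - 1)) = ((n+1).choose 2 : ℤ) * 2 := by push_cast at this ⊢; linarith
  rw [h, Int.mul_ediv_cancel _ two_ne_zero]

lemma summable_theta_norm {q : ℂ} (hq0 : 0 < ‖q‖) (hq1 : ‖q‖ < 1)
    {w : ℂ} (hw : w ≠ 0) :
    Summable (fun j : ℤ => ‖q ^ (j * (j - 1) / 2) * w ^ j‖) := by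
  have hq : q ≠ 0 := by simpa using hq0.ne'
  have hb : (0:ℝ) < ‖w‖ := norm_pos_iff.2 hw
  have ha : (0:ℝ) < ‖q‖ := by simpa using hq0
  apply Summable.of_nat_of_neg
  · have : (fun n : ℕ => ‖q ^ ((n:ℤ) * ((n:ℤ) - 1) / 2) * w ^ (n:ℤ)‖)
        = fun n : ℕ => ‖q‖ ^ (n.choose 2) * ‖w‖ ^ n := by
      ext n
      rw [norm_mul, norm_zpow, norm_zpow, ediv_nat, zpow_natCast, zpow_natCast]
    rw [this]
    apply summable_of_ratio_test_tendsto_lt_one one_pos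
    · exact Eventually.of_forall fun n => by positivity
    · have : (fun n : ℕ => ‖‖q‖ ^ ((n+1).choose 2) * ‖w‖ ^ (n+1)‖ / ‖‖q‖ ^ (n.choose 2) * ‖w‖ ^ n‖)
          = fun n : ℕ => ‖q‖ ^ n * ‖w‖ := by
        ext n
        rw [Real.norm_of_nonneg (by positivity), Real.norm_of_nonneg (by positivity)]
        rw [Nat.choose_succ_succ, Nat.choose_one_right, div_eq_iff (by positivity), pow_add, pow_succ]
        ring
      rw [this]
      simpa using (tendsto_pow_atTop_nhds_zero_of_lt_one ha.le hq1 |>.mul_const ‖w‖)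
  · have : (fun n : ℕ => ‖q ^ ((-n:ℤ) * ((-n:ℤ) - 1) / 2) * w ^ (-n:ℤ)‖)
        = fun n : ℕ => ‖q‖ ^ ((n+1).choose 2) * (‖w‖⁻¹) ^ n := by
      ext n
      rw [norm_mul, norm_zpow, norm_zpow, ediv_neg, zpow_natCast, zpow_neg, zpow_natCast,
        inv_pow]
    rw [this]
    apply summable_of_ratio_test_tendsto_lt_one one_pos
    · exact Eventually.of_forall fun n => by positivity
    · have : (fun n : ℕ => ‖‖q‖ ^ ((n+2).choose 2) * ‖w‖⁻¹ ^ (n+1)‖ / ‖‖q‖ ^ ((n+1).choose 2) * ‖w‖⁻¹ ^ n‖)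
          = fun n : ℕ => ‖q‖ ^ (n+1) * ‖w‖⁻¹ := by
        ext n
        rw [Real.norm_of_nonneg (by positivity), Real.norm_of_nonneg (by positivity)]
        rw [show (n+2).choose 2 = (n+1).choose 2 + (n+1) from by
          rw [Nat.choose_succ_succ (n+1), Nat.choose_one_right]; ring]
        rw [div_eq_iff (by positivity), pow_add, pow_succ]
        ring
      rw [this]
      have h2 := (tendsto_pow_atTop_nhds_zero_of_lt_one ha.le hq1).mul_const ‖w‖⁻¹
      simpa [Function.comp_def] using h2.comp (tendsto_add_atTop_nat 1)


lemma seq_bounds {f : ℕ → ℝ} {L : ℝ} (hf : Filter.Tendsto f atTop (𝓝 L))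
    (hpos : ∀ n, 0 < f n) (hL : 0 < L) :
    ∃ δ C : ℝ, 0 < δ ∧ ∀ n, δ ≤ f n ∧ f n ≤ C := by
  have h := Metric.tendsto_atTop.1 hf (L/2) (by linarith)
  obtain ⟨N, hN⟩ := h
  have hne : (Finset.range (N+1)).Nonempty := ⟨0, by simp⟩
  refine ⟨min (L/2) ((Finset.range (N+1)).inf' hne f),
    max (3*L/2) ((Finset.range (N+1)).sup' hne f), ?_, ?_⟩
  · apply lt_min (by linarith)
    rw [Finset.lt_inf'_iff]
    exact fun i _ => hpos i
  · intro n
    rcases lt_or_ge n (N+1) with h | h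
    · constructor
      · exact le_trans (min_le_right _ _) (Finset.inf'_le f (Finset.mem_range.2 h))
      · exact le_trans (Finset.le_sup' f (Finset.mem_range.2 h)) (le_max_right _ _)
    · have hd := hN n (by omega)
      rw [Real.dist_eq, abs_lt] at hd
      exact ⟨le_trans (min_le_left _ _) (by linarith), le_trans (by linarith) (le_max_left _ _)⟩


variable {q x z : ℂ}



noncomputable def P (q x : ℂ) (n : ℕ) : ℂ := ∏ k ∈ range n, (1 - x * q ^ k)

variable {q x : ℂ}

lemma summable_log (hq1 : ‖q‖ < 1) (x : ℂ) :
    Summable (fun k : ℕ => Complex.log (1 - x * q ^ k)) := by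
  have hq1' : ‖q‖ < 1 := by exact hq1
  apply Summable.of_norm_bounded_eventually_nat (g := fun k => 3/2 * (‖x‖ * ‖q‖ ^ k))
  · exact ((summable_geometric_of_lt_one (norm_nonneg q) hq1').mul_left ‖x‖).mul_left (3/2)
  · have h0 : Tendsto (fun k : ℕ => ‖x‖ * ‖q‖ ^ k) atTop (𝓝 0) := by
      simpa using (tendsto_pow_atTop_nhds_zero_of_lt_one (norm_nonneg q) hq1').const_mul ‖x‖
    filter_upwards [h0.eventually_le_const (by norm_num : (0:ℝ) < 1/2)] with k hk
    have : ‖-(x * q ^ k)‖ ≤ 1/2 := by simpa [norm_mul, norm_pow] using hk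
    calc ‖Complex.log (1 - x * q ^ k)‖ = ‖Complex.log (1 + -(x * q ^ k))‖ := by
          rw [sub_eq_add_neg]
      _ ≤ 3/2 * ‖-(x * q ^ k)‖ := Complex.norm_log_one_add_half_le_self this
      _ ≤ 3/2 * (‖x‖ * ‖q‖ ^ k) := by
          rw [norm_neg, norm_mul, norm_pow]

lemma hasProd_poch (hq1 : ‖q‖ < 1) (hx : ∀ k : ℕ, 1 - x * q ^ k ≠ 0) :
    HasProd (fun k : ℕ => 1 - x * q ^ k)
      (Complex.exp (∑' k : ℕ, Complex.log (1 - x * q ^ k))) := by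
  have h := (summable_log hq1 x).hasSum.cexp
  have hfun : (cexp ∘ fun k : ℕ => Complex.log (1 - x * q ^ k))
      = fun k : ℕ => 1 - x * q ^ k :=
    funext fun n => by simp [Complex.exp_log (hx n)]
  rwa [hfun] at h

lemma poch_eq (hq1 : ‖q‖ < 1) (hx : ∀ k : ℕ, 1 - x * q ^ k ≠ 0) :
    qPochInf q x = Complex.exp (∑' k : ℕ, Complex.log (1 - x * q ^ k)) :=
  (hasProd_poch hq1 hx).tprod_eq

lemma poch_ne_zero (hq1 : ‖q‖ < 1) (hx : ∀ k : ℕ, 1 - x * q ^ k ≠ 0) :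
    qPochInf q x ≠ 0 := by
  rw [poch_eq hq1 hx]; exact Complex.exp_ne_zero _

lemma tendsto_P (hq1 : ‖q‖ < 1) (hx : ∀ k : ℕ, 1 - x * q ^ k ≠ 0) :
    Tendsto (P q x) atTop (𝓝 (qPochInf q x)) := by
  rw [poch_eq hq1 hx]
  exact (hasProd_poch hq1 hx).tendsto_prod_nat

lemma hasProd_zero {k₀ : ℕ} (h : 1 - x * q ^ k₀ = 0) :
    HasProd (fun k : ℕ => 1 - x * q ^ k) 0 := by
  rw [HasProd]
  rw [tendsto_congr' (f₂ := fun _ => (0:ℂ))]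
  · exact tendsto_const_nhds
  · filter_upwards [eventually_ge_atTop ({k₀} : Finset ℕ)] with s hs
    exact Finset.prod_eq_zero (hs (Finset.mem_singleton_self k₀)) h

lemma poch_eq_zero {k₀ : ℕ} (h : 1 - x * q ^ k₀ = 0) : qPochInf q x = 0 :=
  (hasProd_zero h).tprod_eq



noncomputable def G (q : ℂ) (n j : ℕ) : ℂ :=
  if j ≤ n then P q q n / (P q q j * P q q (n - j)) else 0


lemma fac_factor_ne (hq1 : ‖q‖ < 1) (k : ℕ) : 1 - q * q ^ k ≠ 0 := by
  intro h
  have h1 : q * q ^ k = 1 := by linear_combination -h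
  have := congrArg norm h1
  rw [norm_mul, norm_pow, norm_one] at this
  nlinarith [pow_le_one₀ (norm_nonneg q) hq1.le (n := k), norm_nonneg q,
    pow_nonneg (norm_nonneg q) k]

lemma fac_ne_zero (hq1 : ‖q‖ < 1) (n : ℕ) : P q q n ≠ 0 :=
  Finset.prod_ne_zero_iff.2 fun k _ => fac_factor_ne hq1 k

lemma fac_succ (n : ℕ) : P q q (n + 1) = P q q n * (1 - q * q ^ n) := Finset.prod_range_succ _ _

lemma P_zero (x : ℂ) : P q x 0 = 1 := rfl

lemma G_zero (hq1 : ‖q‖ < 1) (n : ℕ) : G q n 0 = 1 := by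
  simp only [G, if_pos (Nat.zero_le n), P_zero, Nat.sub_zero, one_mul]
  exact div_self (fac_ne_zero hq1 n)

lemma G_diag (hq1 : ‖q‖ < 1) (n : ℕ) : G q n n = 1 := by
  simp only [G, if_pos le_rfl, Nat.sub_self, P_zero, mul_one]
  exact div_self (fac_ne_zero hq1 n)

lemma G_of_gt {n j : ℕ} (h : n < j) : G q n j = 0 := by
  simp [G, not_le.2 h]

lemma pascal (hq1 : ‖q‖ < 1) {n j : ℕ} (hj : j ≤ n) :
    G q (n+1) (j+1) = G q n (j+1) + q ^ (n - j) * G q n j := by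
  rcases eq_or_lt_of_le hj with rfl | hlt
  · rw [G_diag hq1, G_of_gt (Nat.lt_succ_self j), Nat.sub_self, pow_zero, G_diag hq1]
    ring
  · obtain ⟨m, rfl⟩ : ∃ m, n = j + m + 1 := ⟨n - j - 1, by omega⟩
    have e1 : j + 1 ≤ j + m + 1 := by omega
    rw [G, G, G, if_pos (by omega), if_pos e1, if_pos (by omega)]
    have e2 : j + m + 1 + 1 - (j + 1) = m + 1 := by omega
    have e3 : j + m + 1 - (j + 1) = m := by omega
    have e4 : j + m + 1 - j = m + 1 := by omega
    rw [e2, e3, e4]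
    have hA := fac_ne_zero (q := q) hq1 j
    have hB := fac_ne_zero (q := q) hq1 m
    have hF := fac_ne_zero (q := q) hq1 (j + m + 1)
    have haj := fac_factor_ne (q := q) hq1 j
    have hbm := fac_factor_ne (q := q) hq1 m
    have hT := fac_factor_ne (q := q) hq1 (j + m + 1)
    rw [fac_succ (j + m + 1), fac_succ j, fac_succ m]
    field_simp
    ring


lemma gauss (hq1 : ‖q‖ < 1) (x : ℂ) (N : ℕ) :
    ∏ k ∈ range N, (1 + x * q ^ k)
      = ∑ j ∈ range (N+1), q ^ (j.choose 2) * G q N j * x ^ j := by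
  induction N with
  | zero => simp [G_zero hq1 0]
  | succ N ih =>
    rw [prod_range_succ, ih]
    rw [sum_range_succ' (fun j => q ^ (j.choose 2) * G q (N+1) j * x ^ j) (N+1)]
    have h1 : ∀ j ∈ range (N+1),
        q ^ ((j+1).choose 2) * G q (N+1) (j+1) * x ^ (j+1)
          = q ^ ((j+1).choose 2) * G q N (j+1) * x ^ (j+1)
            + (q ^ (j.choose 2) * G q N j * x ^ j) * (x * q ^ N) := by
      intro j hj
      have hjN : j ≤ N := by simpa [Nat.lt_succ_iff] using mem_range.1 hj
      rw [pascal hq1 hjN]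
      have hc : (j+1).choose 2 = j.choose 2 + j := by
        rw [Nat.choose_succ_succ, Nat.choose_one_right]; ring
      have hq' : q ^ ((j+1).choose 2) * q ^ (N - j) = q ^ (j.choose 2) * q ^ N := by
        rw [hc, ← pow_add, ← pow_add]
        congr 1
        omega
      calc q ^ ((j+1).choose 2) * (G q N (j+1) + q ^ (N-j) * G q N j) * x ^ (j+1)
          = q ^ ((j+1).choose 2) * G q N (j+1) * x ^ (j+1)
            + (q ^ ((j+1).choose 2) * q ^ (N-j)) * G q N j * x ^ (j+1) := by ring
        _ = _ := by rw [hq']; ring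
    rw [sum_congr rfl h1, sum_add_distrib]
    have h2 : ∑ j ∈ range (N+1), q ^ ((j+1).choose 2) * G q N (j+1) * x ^ (j+1)
        = (∑ j ∈ range (N+1), q ^ (j.choose 2) * G q N j * x ^ j) - 1 := by
      have h3 := sum_range_succ' (fun j => q ^ (j.choose 2) * G q N j * x ^ j) (N+1)
      rw [sum_range_succ (fun j => q ^ (j.choose 2) * G q N j * x ^ j) (N+1),
        G_of_gt (Nat.lt_succ_self N)] at h3
      simp only [Nat.choose_self, mul_zero, zero_mul, add_zero, Nat.choose_zero_right,
        pow_zero, mul_one, one_mul] at h3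
      have h4 : G q N 0 = 1 := G_zero hq1 N
      rw [h4] at h3
      rw [show Nat.choose 0 2 = 0 from rfl] at h3
      linear_combination -h3
    rw [h2, ← sum_mul]
    have h5 : G q (N+1) 0 = 1 := G_zero hq1 (N+1)
    have h6 : Nat.choose 0 2 = 0 := rfl
    rw [h5, h6]
    ring


lemma gauss2 (hq1 : ‖q‖ < 1) {y : ℂ} (hy : y ≠ 0) (x : ℂ) (N : ℕ) :
    ∏ k ∈ range N, (y + x * q ^ k)
      = ∑ j ∈ range (N+1), q ^ (j.choose 2) * G q N j * x ^ j * y ^ (N - j) := by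
  have h1 : ∏ k ∈ range N, (y + x * q ^ k) = y ^ N * ∏ k ∈ range N, (1 + x / y * q ^ k) :=
    calc ∏ k ∈ range N, (y + x * q ^ k)
        = ∏ k ∈ range N, (y * (1 + x / y * q ^ k)) :=
          Finset.prod_congr rfl fun k _ => by field_simp
      _ = (∏ _k ∈ range N, y) * ∏ k ∈ range N, (1 + x / y * q ^ k) := Finset.prod_mul_distrib
      _ = y ^ N * ∏ k ∈ range N, (1 + x / y * q ^ k) := by
          rw [Finset.prod_const, Finset.card_range]
  rw [h1, gauss hq1 (x / y) N, Finset.mul_sum]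
  refine Finset.sum_congr rfl fun j hj => ?_
  have hjN : j ≤ N := by have := Finset.mem_range.1 hj; omega
  have hyN : y ^ N = y ^ j * y ^ (N - j) := by rw [← pow_add]; congr 1; omega
  rw [div_pow, hyN]
  field_simp

/-- nat-power finite Jacobi triple product -/
lemma natID (hq0 : q ≠ 0) (hq1 : ‖q‖ < 1) (n : ℕ) (u : ℂ) :
    ∏ k ∈ range (2*n), (q ^ n + u * q ^ k)
      = ∑ j ∈ range (2*n+1), q ^ (n*(2*n-j)) * (q ^ (j.choose 2) * G q (2*n) j * u ^ j) := by
  have h := gauss2 hq1 (pow_ne_zero n hq0) u (2*n)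
  rw [h]
  exact Finset.sum_congr rfl fun j hj => by rw [← pow_mul]; ring

/-- splitting the LHS -/
lemma lhs_split (hq0 : q ≠ 0) (hz : z ≠ 0) (n : ℕ) :
    ∏ k ∈ range (2*n), (q ^ n + (-z) * q ^ k)
      = q ^ (n.choose 2 + n * n) * (-z) ^ n * (P q (q / z) n * P q z n) := by
  have h2n : 2 * n = n + n := by ring
  rw [h2n, Finset.prod_range_add]
  have hA : ∏ k ∈ range n, (q ^ n + (-z) * q ^ (n + k))
      = q ^ (n * n) * P q z n := by
    have : ∀ k ∈ range n, q ^ n + (-z) * q ^ (n + k) = q ^ n * (1 - z * q ^ k) := by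
      intro k _
      rw [pow_add]
      ring
    rw [Finset.prod_congr rfl this, Finset.prod_mul_distrib, Finset.prod_const,
      Finset.card_range, ← pow_mul, P]
  have hB : ∏ k ∈ range n, (q ^ n + (-z) * q ^ k)
      = q ^ (n.choose 2) * ((-z) ^ n * P q (q / z) n) := by
    have h1 : ∀ k ∈ range n, q ^ n + (-z) * q ^ k = q ^ k * ((-z) + q ^ (n - k)) := by
      intro k hk
      have hkn : k ≤ n := (Finset.mem_range.1 hk).le
      rw [mul_add, ← pow_add]
      have : k + (n - k) = n := by omega
      rw [this]
      ring
    rw [Finset.prod_congr rfl h1, Finset.prod_mul_distrib,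
      Finset.prod_pow_eq_pow_sum]
    have hsum : ∑ k ∈ range n, k = n.choose 2 := by
      have h1 := Finset.sum_range_id_mul_two n
      have h2 := two_mul_choose n
      omega
    rw [hsum]
    congr 1
    have h2 : ∏ k ∈ range n, ((-z) + q ^ (n - k)) = ∏ k ∈ range n, ((-z) + q ^ (k+1)) := by
      have := Finset.prod_range_reflect (fun j => (-z) + q ^ (j + 1)) n
      rw [← this]
      refine Finset.prod_congr rfl fun k hk => ?_
      have hkn : k < n := Finset.mem_range.1 hk
      congr 2
      omega
    rw [h2]
    have h3 : ∀ k ∈ range n, (-z) + q ^ (k+1) = (-z) * (1 - (q / z) * q ^ k) := by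
      intro k _
      rw [pow_succ']
      field_simp
      ring
    rw [Finset.prod_congr rfl h3, Finset.prod_mul_distrib, Finset.prod_const,
      Finset.card_range, P]
  rw [hA, hB, pow_add]
  ring


lemma finite_jtp (hq0 : q ≠ 0) (hq1 : ‖q‖ < 1) (hz : z ≠ 0) (n : ℕ) :
    P q z n * P q (q / z) n
      = ∑ j ∈ range (2*n+1), G q (2*n) j
          * (q ^ ((((j:ℤ)-n) * (((j:ℤ)-n) - 1)) / 2) * (-z) ^ ((j:ℤ)-n)) := by
  have hu : (-z) ≠ 0 := neg_ne_zero.2 hz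
  have key := natID hq0 hq1 n (-z)
  rw [lhs_split hq0 hz n] at key
  have hC : q ^ (n.choose 2 + n * n) * (-z) ^ n ≠ 0 :=
    mul_ne_zero (pow_ne_zero _ hq0) (pow_ne_zero _ hu)
  have hmain : P q z n * P q (q / z) n
      = (q ^ (n.choose 2 + n * n) * (-z) ^ n)⁻¹
        * ∑ j ∈ range (2*n+1), q ^ (n*(2*n-j)) * (q ^ (j.choose 2) * G q (2*n) j * (-z) ^ j) := by
    rw [← key]
    field_simp
  rw [hmain, Finset.mul_sum]
  refine Finset.sum_congr rfl fun j hj => ?_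
  have hjle : j ≤ 2*n := by have := Finset.mem_range.1 hj; omega
  have he : (((j:ℤ)-n) * (((j:ℤ)-n) - 1))
      = (((n*(2*n-j) : ℕ) : ℤ) + ((j.choose 2 : ℕ) : ℤ) - ((n.choose 2 + n*n : ℕ) : ℤ)) * 2 := by
    push_cast [Nat.cast_sub hjle]
    linear_combination (zc n : ((n.choose 2 : ℤ)) * 2 = (n : ℤ) * (n - 1)) - zc j
  have hediv : (((j:ℤ)-n) * (((j:ℤ)-n) - 1)) / 2
      = ((n*(2*n-j) : ℕ) : ℤ) + ((j.choose 2 : ℕ) : ℤ) - ((n.choose 2 + n*n : ℕ) : ℤ) := by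
    rw [he, Int.mul_ediv_cancel _ two_ne_zero]
  rw [hediv, zpow_sub₀ hq0, zpow_add₀ hq0, zpow_natCast, zpow_natCast, zpow_natCast]
  have hzj : (-z) ^ ((j:ℤ) - n) = (-z) ^ j / (-z) ^ n := by
    rw [zpow_sub₀ hu, zpow_natCast, zpow_natCast]
  rw [hzj]
  field_simp


/-- c : the theta coefficients -/
noncomputable def c (q z : ℂ) (m : ℤ) : ℂ := q ^ (m * (m - 1) / 2) * (-z) ^ m

/-- extended binomial -/
noncomputable def G' (q : ℂ) (n : ℕ) (m : ℤ) : ℂ :=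
  if 0 ≤ m + n then G q (2*n) ((m + n).toNat) else 0

lemma sum_eq_tsum (n : ℕ) :
    ∑ j ∈ range (2*n+1), G q (2*n) j * c q z ((j:ℤ) - n) = ∑' m : ℤ, G' q n m * c q z m := by
  rw [tsum_eq_sum (s := Finset.Icc (-(n:ℤ)) n) (f := fun m => G' q n m * c q z m)
    (by
      intro m hm
      rw [Finset.mem_Icc] at hm
      simp only [G']
      rcases lt_or_ge m (-(n:ℤ)) with h | h
      · rw [if_neg (by omega), zero_mul]
      · have h2 : (n:ℤ) < m := by omega
        rw [if_pos (by omega), G_of_gt (by omega), zero_mul])]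
  refine Finset.sum_bij' (fun j _ => (j:ℤ) - n) (fun m _ => (m + n).toNat) ?_ ?_ ?_ ?_ ?_
  · intro j hj
    have := Finset.mem_range.1 hj
    rw [Finset.mem_Icc]
    omega
  · intro m hm
    rw [Finset.mem_Icc] at hm
    rw [Finset.mem_range]
    omega
  · intro j hj
    have := Finset.mem_range.1 hj
    omega
  · intro m hm
    rw [Finset.mem_Icc] at hm
    omega
  · intro j hj
    have := Finset.mem_range.1 hj
    simp only [G']
    rw [if_pos (by omega)]
    congr 2
    omega


lemma tendsto_fac (hq1 : ‖q‖ < 1) :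
    Filter.Tendsto (P q q) atTop (𝓝 (qPochInf q q)) :=
  tendsto_P hq1 (fac_factor_ne hq1)

lemma exists_bounds (hq1 : ‖q‖ < 1) :
    ∃ δ C : ℝ, 0 < δ ∧ ∀ n, δ ≤ ‖P q q n‖ ∧ ‖P q q n‖ ≤ C := by
  have hF : qPochInf q q ≠ 0 := poch_ne_zero hq1 (fac_factor_ne hq1)
  have h1 : Filter.Tendsto (fun n => ‖P q q n‖) atTop (𝓝 (‖qPochInf q q‖)) :=
    (continuous_norm.tendsto _).comp (tendsto_fac hq1)
  exact seq_bounds h1 (fun n => norm_pos_iff.mpr (fac_ne_zero hq1 n)) (norm_pos_iff.mpr hF)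

lemma G'_tendsto (hq1 : ‖q‖ < 1) (m : ℤ) :
    Filter.Tendsto (fun n => G' q n m) atTop (𝓝 ((qPochInf q q)⁻¹)) := by
  have hF : qPochInf q q ≠ 0 := poch_ne_zero hq1 (fac_factor_ne hq1)
  have h2 : Filter.Tendsto (fun n : ℕ => P q q (2*n)) atTop (𝓝 (qPochInf q q)) :=
    (tendsto_fac hq1).comp (tendsto_atTop_mono (fun n : ℕ => by simpa using (by omega : n ≤ 2*n)) tendsto_id)
  have h3 : Filter.Tendsto (fun n : ℕ => P q q ((m + n).toNat)) atTop (𝓝 (qPochInf q q)) :=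
    (tendsto_fac hq1).comp (tendsto_atTop_mono (fun n => by omega : ∀ n : ℕ, n - m.natAbs ≤ (m + n).toNat)
      (tendsto_sub_atTop_nat m.natAbs))
  have h4 : Filter.Tendsto (fun n : ℕ => P q q (2*n - (m + n).toNat)) atTop (𝓝 (qPochInf q q)) :=
    (tendsto_fac hq1).comp (tendsto_atTop_mono (fun n => by omega : ∀ n : ℕ, n - m.natAbs ≤ 2*n - (m + n).toNat)
      (tendsto_sub_atTop_nat m.natAbs))
  have h5 : Filter.Tendsto
      (fun n : ℕ => P q q (2*n) / (P q q ((m + n).toNat) * P q q (2*n - (m + n).toNat)))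
      atTop (𝓝 (qPochInf q q / (qPochInf q q * qPochInf q q))) :=
    h2.div (h3.mul h4) (mul_ne_zero hF hF)
  have h6 : qPochInf q q / (qPochInf q q * qPochInf q q) = (qPochInf q q)⁻¹ := by
    field_simp
  rw [h6] at h5
  apply h5.congr'
  filter_upwards [eventually_ge_atTop m.natAbs] with n hn
  simp only [G']
  rw [if_pos (by omega), G, if_pos (by omega)]

lemma main_generic (hq0 : q ≠ 0) (hq1 : ‖q‖ < 1) (hz : z ≠ 0)
    (hxz : ∀ k : ℕ, 1 - z * q ^ k ≠ 0) (hxqz : ∀ k : ℕ, 1 - (q / z) * q ^ k ≠ 0) :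
    HasSum (fun m : ℤ => c q z m) (thetaQ q z) := by
  have habs : 0 < ‖q‖ := by
    simpa [norm_pos_iff] using hq0
  have hF : qPochInf q q ≠ 0 := poch_ne_zero hq1 (fac_factor_ne hq1)
  have hsum : Summable (fun m : ℤ => c q z m) :=
    (summable_theta_norm habs hq1 (neg_ne_zero.2 hz)).of_norm
  -- LHS limit
  have hL : Filter.Tendsto (fun n => P q z n * P q (q/z) n) atTop
      (𝓝 (qPochInf q z * qPochInf q (q/z))) :=
    (tendsto_P hq1 hxz).mul (tendsto_P hq1 hxqz)
  -- RHS limit by Tannery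
  obtain ⟨δ, C, hδ, hb⟩ := exists_bounds (q := q) hq1
  have hC : 0 < C := lt_of_lt_of_le hδ (le_trans (hb 0).1 (hb 0).2)
  have hGbound : ∀ (n : ℕ) (m : ℤ), ‖G' q n m‖ ≤ C / (δ * δ) := by
    intro n m
    simp only [G']
    split
    · rw [G]
      split
      · rw [norm_div, norm_mul]
        apply div_le_div₀ (by positivity) (hb _).2 (by positivity)
        exact mul_le_mul (hb _).1 (hb _).1 hδ.le (norm_nonneg _)
      · simpa using by positivity
    · simpa using by positivity
  have hT : Filter.Tendsto (fun n => ∑' m : ℤ, G' q n m * c q z m) atTop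
      (𝓝 (∑' m : ℤ, (qPochInf q q)⁻¹ * c q z m)) := by
    apply tendsto_tsum_of_dominated_convergence
      (bound := fun m => C / (δ * δ) * ‖c q z m‖)
    · exact ((summable_theta_norm habs hq1 (neg_ne_zero.2 hz)).mul_left _)
    · exact fun m => (G'_tendsto hq1 m).mul_const _
    · filter_upwards with n m
      rw [norm_mul]
      exact mul_le_mul_of_nonneg_right (hGbound n m) (norm_nonneg _)
  -- identify the limits
  have hEq : ∀ n, P q z n * P q (q/z) n = ∑' m : ℤ, G' q n m * c q z m := by
    intro n
    rw [finite_jtp hq0 hq1 hz n, ← sum_eq_tsum]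
    simp only [c]
  rw [show (fun n => P q z n * P q (q/z) n) = fun n => ∑' m : ℤ, G' q n m * c q z m
    from funext hEq] at hL
  have hkey : qPochInf q z * qPochInf q (q/z) = (qPochInf q q)⁻¹ * ∑' m : ℤ, c q z m := by
    have := tendsto_nhds_unique hL hT
    rwa [tsum_mul_left] at this
  have hθ : thetaQ q z = ∑' m : ℤ, c q z m := by
    rw [thetaQ, mul_assoc, hkey]
    field_simp
  rw [hθ]
  exact hsum.hasSum


lemma theta_zero (hq0 : q ≠ 0) {L : ℤ} (hzL : z = q ^ L) : thetaQ q z = 0 := by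
  rcases le_or_gt L 0 with hL | hL
  · have h : 1 - z * q ^ ((-L).toNat) = 0 := by
      rw [hzL, ← zpow_natCast q ((-L).toNat), ← zpow_add₀ hq0]
      rw [show L + ((-L).toNat : ℤ) = 0 by omega]
      simp
    rw [thetaQ, poch_eq_zero h]
    ring
  · have hqz : q / z = q ^ ((1 : ℤ) - L) := by
      rw [hzL, zpow_sub₀ hq0, zpow_one]
    have h : 1 - (q / z) * q ^ ((L - 1).toNat) = 0 := by
      rw [hqz, ← zpow_natCast q ((L-1).toNat), ← zpow_add₀ hq0,
        show ((1:ℤ) - L) + ((L-1).toNat : ℤ) = 0 by omega]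
      simp
    rw [thetaQ, poch_eq_zero h]
    ring

lemma c_neg (hq0 : q ≠ 0) {L : ℤ} (hzL : z = q ^ L) (j : ℤ) :
    c q z (1 - 2*L - j) = - c q z j := by
  have hm : ∀ m : ℤ, c q z m = q ^ (m * (m - 1) / 2 + L * m) * (-1 : ℂ) ^ m := by
    intro m
    rw [c, hzL, show -(q ^ L) = (-1 : ℂ) * q ^ L by ring, mul_zpow, zpow_add₀ hq0]
    rw [← zpow_mul q L m]
    ring
  set m := 1 - 2*L - j with hmdef
  rw [hm, hm]
  have hexp : m * (m - 1) / 2 + L * m = j * (j - 1) / 2 + L * j := by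
    have h1 : m * (m - 1) = j * (j - 1) + (L * j - L * m) * 2 := by
      rw [hmdef]; ring
    rw [h1, Int.add_mul_ediv_right _ _ (two_ne_zero)]
    ring
  rw [hexp]
  have hsign : (-1 : ℂ) ^ m = -(-1 : ℂ) ^ j := by
    have hodd : Odd (m + j) := by rw [hmdef]; exact ⟨-L, by ring⟩
    have hne : (-1 : ℂ) ≠ 0 := by norm_num
    have hB2 : (-1:ℂ) ^ j * (-1:ℂ) ^ j = 1 := by
      rw [← zpow_add₀ hne, show j + j = 2 * j by ring, zpow_mul]
      norm_num
    have hAB : (-1:ℂ) ^ m * (-1:ℂ) ^ j = -1 := by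
      rw [← zpow_add₀ hne]
      exact Odd.neg_one_zpow hodd
    calc (-1:ℂ) ^ m = (-1:ℂ) ^ m * ((-1:ℂ) ^ j * (-1:ℂ) ^ j) := by rw [hB2, mul_one]
      _ = ((-1:ℂ) ^ m * (-1:ℂ) ^ j) * (-1:ℂ) ^ j := by ring
      _ = -(-1:ℂ) ^ j := by rw [hAB]; ring
  rw [hsign]
  ring

lemma hasSum_zero_bad (hq0 : 0 < ‖q‖) (hq1 : ‖q‖ < 1) (hz : z ≠ 0)
    {L : ℤ} (hzL : z = q ^ L) :
    HasSum (fun m => c q z m) 0 := by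
  have hq0' : q ≠ 0 := by simpa [norm_pos_iff] using hq0
  have hsum : Summable (fun m : ℤ => c q z m) :=
    (summable_theta_norm hq0 hq1 (neg_ne_zero.2 hz)).of_norm
  have hT : ∑' m : ℤ, c q z m = - ∑' m : ℤ, c q z m := by
    calc ∑' m : ℤ, c q z m = ∑' j : ℤ, c q z ((Equiv.subLeft (1 - 2*L)) j) :=
          ((Equiv.subLeft (1 - 2*L)).tsum_eq (fun m => c q z m)).symm
      _ = ∑' j : ℤ, - c q z j := by
          refine tsum_congr fun j => ?_
          rw [Equiv.subLeft_apply, show 1 - 2*L - j = 1 - 2*L - j from rfl]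
          exact c_neg hq0' hzL j
      _ = - ∑' m : ℤ, c q z m := tsum_neg
  have h0 : ∑' m : ℤ, c q z m = 0 := by
    linear_combination (1/2 : ℂ) * hT
  rw [← h0]
  exact hsum.hasSum


end JTP

/-- The Jacobi triple product expansion: for `z ≠ 0`, the family
`(q^{j(j-1)/2} (-z)^j)_{j ∈ ℤ}` is absolutely summable with sum `θ_q(z)`. -/
theorem thetaQ_laurent_expansion
    (q : ℂ) (hq0 : 0 < ‖q‖) (hq1 : ‖q‖ < 1)
    (z : ℂ) (hz : z ≠ 0) :
    Summable (fun j : ℤ => ‖q ^ (j * (j - 1) / 2) * (-z) ^ j‖) ∧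
      HasSum (fun j : ℤ => q ^ (j * (j - 1) / 2) * (-z) ^ j) (thetaQ q z) := by
  have hq0' : q ≠ 0 := by simpa [norm_pos_iff] using hq0
  constructor
  · have := JTP.summable_theta_norm hq0 hq1 (neg_ne_zero.2 hz)
    simpa using this
  · by_cases h : ∃ L : ℤ, z = q ^ L
    · obtain ⟨L, hzL⟩ := h
      rw [JTP.theta_zero hq0' hzL]
      have := JTP.hasSum_zero_bad hq0 hq1 hz hzL
      simpa only [JTP.c] using this
    · have hxz : ∀ k : ℕ, 1 - z * q ^ k ≠ 0 := by
        intro k hk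
        have h1 : z * q ^ k = 1 := by linear_combination -hk
        refine h ⟨-(k : ℤ), ?_⟩
        rw [zpow_neg, zpow_natCast]
        exact eq_inv_of_mul_eq_one_left (by linear_combination h1)
      have hxqz : ∀ k : ℕ, 1 - (q / z) * q ^ k ≠ 0 := by
        intro k hk
        have h1 : q / z * q ^ k = 1 := by linear_combination -hk
        refine h ⟨(k : ℤ) + 1, ?_⟩
        rw [zpow_add₀ hq0', zpow_natCast, zpow_one]
        field_simp at h1
        linear_combination -h1
      have := JTP.main_generic hq0' hq1 hz hxz hxqz
      simpa only [JTP.c] using this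
end

section
/- Let q ∈ ℂ with 0 < |q| < 1, fix σ ∈ ℂ with σ² = q, let a ∈ ℂ∖{0}, and let h be the holomorphic branch of the square root on the slit plane U = ℂ∖[0,∞) given by h(z) = exp((1/2)·Log z) for a fixed branch Log of the logarithm on U. Suppose A, B, C, D ∈ ℂ and n, m, l, k, N, M, L, K ∈ ℤ satisfy A·h(z)ⁿ·θ_q(q^N a z) + B·h(z)^m·θ_q(−q^M a z) + C·h(z)^l·θ_q(σ q^L a z) + D·h(z)^k·θ_q(−σ q^K a z) = 0 for all z ∈ U. Then A = B = C = D = 0. -/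
open Complex Finset Filter

section Poch
variable {q : ℂ}

lemma summable_log_poch (hq1 : ‖q‖ < 1) (x : ℂ) :
    Summable (fun k : ℕ => Complex.log (1 - x * q ^ k)) := by
  have hgeo : Summable (fun k : ℕ => (3/2 : ℝ) * (‖x‖ * ‖q‖ ^ k)) :=
    ((summable_geometric_of_lt_one (norm_nonneg q) hq1).mul_left _).mul_left _
  refine hgeo.of_norm_bounded_eventually_nat ?_
  have h0 : Tendsto (fun k : ℕ => ‖x‖ * ‖q‖ ^ k) atTop (nhds 0) := by
    simpa using (tendsto_pow_atTop_nhds_zero_of_lt_one (norm_nonneg q) hq1).const_mul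
      (‖x‖)
  filter_upwards [h0.eventually_le_const (show (0:ℝ) < 1/2 by norm_num)] with kk hk
  have hnorm : ‖-(x * q ^ kk)‖ ≤ 1/2 := by
    simpa [norm_mul, norm_pow] using hk
  have := Complex.norm_log_one_add_half_le_self hnorm
  calc ‖Complex.log (1 - x * q ^ kk)‖
      = ‖Complex.log (1 + -(x * q ^ kk))‖ := by ring_nf
    _ ≤ 3/2 * ‖-(x * q ^ kk)‖ := this
    _ ≤ 3/2 * (‖x‖ * ‖q‖ ^ kk) := by
        simp [norm_mul, norm_pow]

lemma poch_hasProd (hq1 : ‖q‖ < 1) (x : ℂ) (K : ℕ)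
    (hK : ∀ j : ℕ, K ≤ j → x * q ^ j ≠ 1) :
    HasProd (fun j : ℕ => 1 - x * q ^ j)
      ((∏ i ∈ Finset.range K, (1 - x * q ^ i)) *
        Complex.exp (∑' j : ℕ, Complex.log (1 - x * q ^ (j + K)))) := by
  have hne : ∀ j : ℕ, (1 - x * q ^ (j + K)) ≠ 0 := by
    intro j hc
    exact hK (j + K) (by omega) (by linear_combination -hc)
  have hsum : Summable (fun j : ℕ => Complex.log (1 - x * q ^ (j + K))) :=
    (summable_nat_add_iff K).2 (summable_log_poch hq1 x)
  have htail : HasProd (fun j : ℕ => 1 - x * q ^ (j + K))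
      (Complex.exp (∑' j : ℕ, Complex.log (1 - x * q ^ (j + K)))) := by
    have h1 := hsum.hasSum.cexp
    have h2 : (fun j : ℕ => Complex.exp (Complex.log (1 - x * q ^ (j + K))))
        = fun j : ℕ => 1 - x * q ^ (j + K) := funext fun j => Complex.exp_log (hne j)
    rw [Function.comp_def] at h1
    rwa [h2] at h1
  classical
  let s : Set ℕ := ↑(Finset.range K)
  let e : ℕ ≃ ↥(sᶜ) :=
    ((notMemRangeEquiv K).symm.trans (Equiv.subtypeEquivRight (by
      intro j
      simp [s])))
  have hcoe : ∀ j : ℕ, ((e j : ℕ)) = j + K := fun j => rfl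
  have hcompl : HasProd ((fun j : ℕ => 1 - x * q ^ j) ∘ ((↑) : ↥(sᶜ) → ℕ))
      (Complex.exp (∑' j : ℕ, Complex.log (1 - x * q ^ (j + K)))) := by
    rw [← e.hasProd_iff]
    have hfe : ((fun j : ℕ => 1 - x * q ^ j) ∘ ((↑) : ↥(sᶜ) → ℕ)) ∘ e
        = fun j : ℕ => 1 - x * q ^ (j + K) := by
      funext j
      show 1 - x * q ^ ((e j : ℕ)) = _
      rw [hcoe]
    rw [hfe]
    exact htail
  have hfin : HasProd ((fun j : ℕ => 1 - x * q ^ j) ∘ ((↑) : ↥s → ℕ))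
      (∏ i ∈ Finset.range K, (1 - x * q ^ i)) :=
    (Finset.range K).hasProd _
  exact hfin.mul_compl hcompl

lemma poch_eq (hq1 : ‖q‖ < 1) (x : ℂ) (K : ℕ)
    (hK : ∀ j : ℕ, K ≤ j → x * q ^ j ≠ 1) :
    qPochInf q x = (∏ i ∈ Finset.range K, (1 - x * q ^ i)) *
      Complex.exp (∑' j : ℕ, Complex.log (1 - x * q ^ (j + K))) :=
  (poch_hasProd hq1 x K hK).tprod_eq

lemma poch_ne_zero (hq1 : ‖q‖ < 1) (x : ℂ)
    (h : ∀ j : ℕ, x * q ^ j ≠ 1) : qPochInf q x ≠ 0 := by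
  rw [poch_eq hq1 x 0 (fun j _ => h j)]
  simpa using Complex.exp_ne_zero _

lemma poch_eq_zero (hq0 : 0 < ‖q‖) (hq1 : ‖q‖ < 1) (x : ℂ) (j : ℕ)
    (hj : x * q ^ j = 1) : qPochInf q x = 0 := by
  have hK : ∀ i : ℕ, j + 1 ≤ i → x * q ^ i ≠ 1 := by
    intro i hi hc
    have hx : x ≠ 0 := by rintro rfl; simp at hj
    have hqi : q ^ i = q ^ j := by
      have := hc.trans hj.symm
      exact mul_left_cancel₀ hx this
    have habs : ‖q‖ ^ i = ‖q‖ ^ j := by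
      rw [← norm_pow, ← norm_pow, hqi]
    have := pow_right_injective₀ hq0 (ne_of_lt hq1) habs
    omega
  rw [poch_eq hq1 x (j + 1) hK]
  have : (1 - x * q ^ j) = 0 := by linear_combination -hj
  rw [Finset.prod_eq_zero (Finset.self_mem_range_succ j) this, zero_mul]

end Poch
section Poch2
variable {q : ℂ}

lemma poch_shift (hq0 : 0 < ‖q‖) (hq1 : ‖q‖ < 1) (x : ℂ) :
    qPochInf q x = (1 - x) * qPochInf q (q * x) := by
  by_cases hcase : ∀ j : ℕ, 1 ≤ j → x * q ^ j ≠ 1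
  · rw [poch_eq hq1 x 1 hcase]
    have hK' : ∀ j : ℕ, 0 ≤ j → (q * x) * q ^ j ≠ 1 := by
      intro j _ hc
      refine hcase (j + 1) (by omega) ?_
      rw [pow_succ]
      linear_combination hc
    rw [poch_eq hq1 (q * x) 0 hK']
    simp only [Finset.prod_range_one, Finset.prod_range_zero, pow_zero, mul_one, one_mul]
    have harg : (fun j : ℕ => Complex.log (1 - x * q ^ (j + 1)))
        = fun j : ℕ => Complex.log (1 - q * x * q ^ (j + 0)) := by
      funext j; congr 1; ring
    rw [show ∑' (j : ℕ), Complex.log (1 - x * q ^ (j + 1))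
        = ∑' (j : ℕ), Complex.log (1 - q * x * q ^ (j + 0)) from congrArg tsum harg]
  · push_neg at hcase
    obtain ⟨j, hj1, hxj⟩ := hcase
    rw [poch_eq_zero hq0 hq1 x j hxj, poch_eq_zero hq0 hq1 (q * x) (j - 1) ?_, mul_zero]
    have hexp : j - 1 + 1 = j := by omega
    calc q * x * q ^ (j - 1) = x * q ^ (j - 1 + 1) := by rw [pow_succ]; ring
      _ = 1 := by rw [hexp]; exact hxj

lemma theta_FE (hq0 : 0 < ‖q‖) (hq1 : ‖q‖ < 1) (z : ℂ) (hz : z ≠ 0) :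
    z * thetaQ q (q * z) = - thetaQ q z := by
  have hqne : q ≠ 0 := by
    intro hh; rw [hh] at hq0; simp at hq0
  have h1 : qPochInf q z⁻¹ = (1 - z⁻¹) * qPochInf q (q * z⁻¹) := poch_shift hq0 hq1 _
  have h2 : qPochInf q z = (1 - z) * qPochInf q (q * z) := poch_shift hq0 hq1 _
  unfold thetaQ
  rw [show q / (q * z) = z⁻¹ by field_simp, show q / z = q * z⁻¹ by rw [div_eq_mul_inv]]
  rw [h1, h2]
  linear_combination
    (-(qPochInf q q * qPochInf q (q * z) * qPochInf q (q * z⁻¹))) * (mul_inv_cancel₀ hz)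

lemma theta_ne_zero (hq1 : ‖q‖ < 1) (z : ℂ)
    (h1 : ∀ j : ℕ, z * q ^ j ≠ 1) (h2 : ∀ j : ℕ, (q / z) * q ^ j ≠ 1) :
    thetaQ q z ≠ 0 := by
  have hq : ∀ j : ℕ, q * q ^ j ≠ 1 := by
    intro j hc
    have habs : ‖q‖ * ‖q‖ ^ j = 1 := by
      have := congrArg norm hc
      simpa [map_mul, map_pow] using this
    have hlt : ‖q‖ * ‖q‖ ^ j < 1 := by
      calc ‖q‖ * ‖q‖ ^ j ≤ ‖q‖ * 1 :=
            mul_le_mul_of_nonneg_left (pow_le_one₀ (norm_nonneg _) hq1.le)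
              (norm_nonneg _)
        _ < 1 := by rwa [mul_one]
    linarith
  exact mul_ne_zero (mul_ne_zero (poch_ne_zero hq1 q hq) (poch_ne_zero hq1 z h1))
    (poch_ne_zero hq1 _ h2)

lemma theta_one_eq_zero (hq0 : 0 < ‖q‖) (hq1 : ‖q‖ < 1) :
    thetaQ q 1 = 0 := by
  unfold thetaQ
  rw [poch_eq_zero hq0 hq1 1 0 (by simp)]
  ring

lemma poch_differentiable (hq1 : ‖q‖ < 1) :
    Differentiable ℂ (fun x => qPochInf q x) := by
  intro x0
  set R : ℝ := ‖x0‖ + 1 with hR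
  have hRpos : 0 < R := by positivity
  have htend : Filter.Tendsto (fun K : ℕ => ‖q‖ ^ K * R) Filter.atTop (nhds 0) := by
    simpa using
      (tendsto_pow_atTop_nhds_zero_of_lt_one (norm_nonneg q) hq1).mul_const R
  obtain ⟨K, hKb⟩ := (htend.eventually_le_const (show (0:ℝ) < 1/2 by norm_num)).exists
  have hball : ∀ x ∈ Metric.ball (0:ℂ) R, ∀ j : ℕ, ‖(x * q ^ (j + K))‖ ≤ 1/2 := by
    intro x hx j
    have hxR : ‖x‖ ≤ R := by
      have := Metric.mem_ball.mp hx
      rw [Complex.dist_eq, sub_zero] at this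
      exact this.le
    rw [norm_mul, norm_pow]
    calc ‖x‖ * ‖q‖ ^ (j + K) ≤ R * ‖q‖ ^ K := by
          apply mul_le_mul hxR
            (pow_le_pow_of_le_one (norm_nonneg _) hq1.le (by omega))
            (by positivity) hRpos.le
      _ = ‖q‖ ^ K * R := by ring
      _ ≤ 1/2 := hKb
  have hS : DifferentiableOn ℂ (fun x => ∑' j : ℕ, Complex.log (1 - x * q ^ (j + K)))
      (Metric.ball (0:ℂ) R) := by
    refine differentiableOn_tsum_of_summable_norm
      (u := fun j => (3/2 : ℝ) * ((R * ‖q‖ ^ K) * ‖q‖ ^ j)) ?_ ?_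
      Metric.isOpen_ball ?_
    · exact (((summable_geometric_of_lt_one (norm_nonneg q)
        hq1).mul_left _).mul_left _)
    · intro j
      intro x hx
      apply DifferentiableAt.differentiableWithinAt
      apply DifferentiableAt.clog
      · fun_prop
      · rw [Complex.mem_slitPlane_iff]
        left
        have hb := hball x hx j
        have hre : (x * q ^ (j + K)).re ≤ 1/2 := by
          calc (x * q ^ (j + K)).re ≤ ‖(x * q ^ (j + K))‖ := Complex.re_le_norm _
            _ ≤ 1/2 := hb
        simp only [Complex.sub_re, Complex.one_re]
        linarith
    · intro j x hx
      have hb := hball x hx j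
      have hxR : ‖x‖ ≤ R := by
        have := Metric.mem_ball.mp hx
        rw [Complex.dist_eq, sub_zero] at this
        exact this.le
      calc ‖Complex.log (1 - x * q ^ (j + K))‖
          = ‖Complex.log (1 + -(x * q ^ (j + K)))‖ := by ring_nf
        _ ≤ 3/2 * ‖-(x * q ^ (j + K))‖ :=
            Complex.norm_log_one_add_half_le_self (by simpa using hb)
        _ ≤ 3/2 * ((R * ‖q‖ ^ K) * ‖q‖ ^ j) := by
            have : ‖-(x * q ^ (j + K))‖ = ‖x‖ * ‖q‖ ^ (j + K) := by
              simp [norm_mul, norm_pow]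
            rw [this, pow_add]
            have h2 : ‖x‖ * (‖q‖ ^ j * ‖q‖ ^ K)
                ≤ R * (‖q‖ ^ K * ‖q‖ ^ j) := by
              rw [show ‖q‖ ^ j * ‖q‖ ^ K
                  = ‖q‖ ^ K * ‖q‖ ^ j by ring]
              exact mul_le_mul hxR le_rfl (by positivity) hRpos.le
            have h3 := mul_le_mul_of_nonneg_left h2 (show (0:ℝ) ≤ 3/2 by norm_num)
            exact le_trans h3 (le_of_eq (by ring))
  have hg : DifferentiableOn ℂ
      (fun x => (∏ i ∈ Finset.range K, (1 - x * q ^ i)) *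
        Complex.exp (∑' j : ℕ, Complex.log (1 - x * q ^ (j + K)))) (Metric.ball (0:ℂ) R) := by
    apply DifferentiableOn.mul
    · apply Differentiable.differentiableOn
      apply Differentiable.fun_finsetProd
      intro i _
      fun_prop
    · exact hS.cexp
  have heq : Set.EqOn (fun x => qPochInf q x)
      (fun x => (∏ i ∈ Finset.range K, (1 - x * q ^ i)) *
        Complex.exp (∑' j : ℕ, Complex.log (1 - x * q ^ (j + K)))) (Metric.ball (0:ℂ) R) := by
    intro x hx
    refine poch_eq hq1 x K ?_
    intro j hj hc
    have := hball x hx (j - K)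
    rw [show j - K + K = j by omega] at this
    rw [hc] at this
    simp at this
    linarith
  exact (hg.congr heq).differentiableAt
    (Metric.isOpen_ball.mem_nhds (by rw [Metric.mem_ball, dist_zero_right, hR]; linarith))

lemma theta_differentiableAt (hq1 : ‖q‖ < 1) (z : ℂ) (hz : z ≠ 0) :
    DifferentiableAt ℂ (thetaQ q) z := by
  have hP := poch_differentiable (q := q) hq1
  show DifferentiableAt ℂ (fun z => qPochInf q q * qPochInf q z * qPochInf q (q / z)) z
  apply DifferentiableAt.mul
  · exact (differentiableAt_const _).mul (hP z)
  · exact (hP _).comp z ((differentiableAt_const q).div differentiableAt_id hz)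

end Poch2
section Sigma
variable {q σ : ℂ}

lemma q_zpow (hσ : σ ^ 2 = q) (f : ℤ) : q ^ f = σ ^ (2 * f) := by
  rw [← hσ, ← zpow_natCast σ 2, ← zpow_mul]
  norm_num

lemma abs_sigma_lt (hσ : σ ^ 2 = q) (hq0 : 0 < ‖q‖) (hq1 : ‖q‖ < 1) :
    0 < ‖σ‖ ∧ ‖σ‖ < 1 := by
  have h2 : ‖σ‖ ^ 2 = ‖q‖ := by rw [← norm_pow, hσ]
  constructor
  · rcases lt_or_eq_of_le (norm_nonneg σ) with hlt | heq
    · exact hlt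
    · exfalso; rw [← heq] at h2; simp at h2; rw [← h2] at hq0; simp at hq0
  · nlinarith [norm_nonneg σ]

lemma sigma_zpow_eq_one (hσ : σ ^ 2 = q) (hq0 : 0 < ‖q‖)
    (hq1 : ‖q‖ < 1) {e : ℤ} (h : ‖(σ ^ e)‖ = 1) : e = 0 := by
  obtain ⟨hs0, hs1⟩ := abs_sigma_lt hσ hq0 hq1
  have habs : ‖σ‖ ^ e = 1 := by rw [← norm_zpow]; exact h
  have h0 : ‖σ‖ ^ (0:ℤ) = 1 := by simp
  exact zpow_right_injective₀ hs0 (ne_of_lt hs1) (habs.trans h0.symm)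

lemma sigma_zpow_ne_one (hσ : σ ^ 2 = q) (hq0 : 0 < ‖q‖)
    (hq1 : ‖q‖ < 1) {e : ℤ} (he : e ≠ 0) : σ ^ e ≠ 1 := by
  intro hc
  exact he (sigma_zpow_eq_one hσ hq0 hq1 (by rw [hc]; simp))

lemma sigma_zpow_ne_neg_sigma_zpow (hσ : σ ^ 2 = q) (hq0 : 0 < ‖q‖)
    (hq1 : ‖q‖ < 1) (X Y : ℤ) : σ ^ X ≠ -σ ^ Y := by
  intro hc
  have hσ0 : σ ≠ 0 := by
    intro hh
    rw [hh] at hσ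
    rw [← hσ] at hq0
    simp at hq0
  have hdiv : σ ^ (X - Y) = -1 := by
    rw [zpow_sub₀ hσ0, hc, neg_div, div_self (zpow_ne_zero _ hσ0)]
  have habs : ‖(σ ^ (X - Y))‖ = 1 := by rw [hdiv]; simp
  have := sigma_zpow_eq_one hσ hq0 hq1 habs
  rw [this] at hdiv
  simp at hdiv
  exact absurd hdiv.symm (by norm_num)

lemma sigma_zpow_ne_sigma_zpow (hσ : σ ^ 2 = q) (hq0 : 0 < ‖q‖)
    (hq1 : ‖q‖ < 1) {X Y : ℤ} (hXY : X ≠ Y) : σ ^ X ≠ σ ^ Y := by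
  intro hc
  have hσ0 : σ ≠ 0 := by
    intro hh
    rw [hh] at hσ
    rw [← hσ] at hq0
    simp at hq0
  have hdiv : σ ^ (X - Y) = 1 := by
    rw [zpow_sub₀ hσ0, hc, div_self (zpow_ne_zero _ hσ0)]
  exact sigma_zpow_ne_one hσ hq0 hq1 (sub_ne_zero.mpr hXY) hdiv

lemma theta_sigma_ne_zero (hσ : σ ^ 2 = q) (hq0 : 0 < ‖q‖)
    (hq1 : ‖q‖ < 1) (e : ℤ) : thetaQ q (σ * q ^ e) ≠ 0 := by
  have hqne : q ≠ 0 := by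
    intro hh; rw [hh] at hq0; simp at hq0
  have hσ0 : σ ≠ 0 := by
    intro hh
    rw [hh] at hσ
    rw [← hσ] at hq0
    simp at hq0
  apply theta_ne_zero hq1
  · intro j hc
    have hrw : σ * q ^ e * q ^ j = σ ^ (1 + 2 * e + 2 * (j:ℤ)) := by
      rw [zpow_add₀ hσ0, zpow_add₀ hσ0, zpow_one, ← q_zpow hσ, ← q_zpow hσ, zpow_natCast]
    rw [hrw] at hc
    exact sigma_zpow_ne_one hσ hq0 hq1 (by omega) hc
  · intro j hc
    have hσe : σ * q ^ e ≠ 0 := mul_ne_zero hσ0 (zpow_ne_zero _ hqne)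
    rw [div_mul_eq_mul_div, div_eq_iff hσe, one_mul] at hc
    have h1 : q * q ^ j = σ ^ (2 * (1 + (j:ℤ))) := by
      rw [show (2:ℤ) * (1 + (j:ℤ)) = 2 * 1 + 2 * (j:ℤ) by ring, zpow_add₀ hσ0,
        ← q_zpow hσ, ← q_zpow hσ, zpow_one, zpow_natCast]
    have h2 : σ * q ^ e = σ ^ (1 + 2 * e) := by
      rw [zpow_add₀ hσ0, zpow_one, ← q_zpow hσ]
    rw [h1, h2] at hc
    exact sigma_zpow_ne_sigma_zpow hσ hq0 hq1 (by omega) hc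

end Sigma

lemma exists_sqrt (c : ℂ) (hc : c ≠ 0) : ∃ w : ℂ, w ≠ 0 ∧ w ^ 2 = c := by
  refine ⟨c ^ ((2:ℕ):ℂ)⁻¹, ?_, ?_⟩
  · intro h0
    apply hc
    have := Complex.cpow_nat_inv_pow c (two_ne_zero)
    rw [h0] at this
    simpa using this.symm
  · exact Complex.cpow_nat_inv_pow c two_ne_zero
section SigForm
variable {q σ : ℂ}

lemma sigma_form1 (hσ : σ ^ 2 = q) (hσ0 : σ ≠ 0) (e f g i : ℤ) :
    σ ^ e * σ * q ^ f * q ^ g * q ^ i = σ ^ (e + 1 + 2*f + 2*g + 2*i) := by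
  rw [zpow_add₀ hσ0, zpow_add₀ hσ0, zpow_add₀ hσ0, zpow_add₀ hσ0, zpow_one,
    ← q_zpow hσ, ← q_zpow hσ, ← q_zpow hσ]

lemma sigma_form2 (hσ : σ ^ 2 = q) (hσ0 : σ ≠ 0) (e f g i : ℤ) :
    σ ^ e * q ^ f * q ^ g * q ^ i = σ ^ (e + 2*f + 2*g + 2*i) := by
  rw [zpow_add₀ hσ0, zpow_add₀ hσ0, zpow_add₀ hσ0,
    ← q_zpow hσ, ← q_zpow hσ, ← q_zpow hσ]

end SigForm
/-- The slit plane `U = ℂ ∖ [0,∞)`. -/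
def slitPlane' : Set ℂ := {z : ℂ | ¬ (0 ≤ z.re ∧ z.im = 0)}

/-- Any functional relation
`A z^{n/2} θ_q(q^N a z) + B z^{m/2} θ_q(-q^M a z) + C z^{l/2} θ_q(q^{L+1/2} a z)
  + D z^{k/2} θ_q(-q^{K+1/2} a z) = 0`
(on the slit plane, for a fixed holomorphic branch `h` of the square root and a fixed
square root `σ` of `q`) is trivial: `A = B = C = D = 0`. -/
theorem thetaQ_half_integer_relations_trivial
    (q : ℂ) (hq0 : 0 < ‖q‖) (hq1 : ‖q‖ < 1)
    (σ : ℂ) (hσ : σ ^ 2 = q)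
    (a : ℂ) (ha : a ≠ 0)
    (Log : ℂ → ℂ) (hLog : ∀ z ∈ slitPlane', Complex.exp (Log z) = z)
    (hLogHolo : DifferentiableOn ℂ Log slitPlane')
    (h : ℂ → ℂ) (hh : ∀ z, h z = Complex.exp ((1 / 2 : ℂ) * Log z))
    (A B C D : ℂ) (n m l k N M L K : ℤ)
    (hrel : ∀ z ∈ slitPlane',
      A * h z ^ n * thetaQ q (q ^ N * a * z)
        + B * h z ^ m * thetaQ q (-(q ^ M) * a * z)
        + C * h z ^ l * thetaQ q (σ * q ^ L * a * z)
        + D * h z ^ k * thetaQ q (-(σ * q ^ K) * a * z) = 0) :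
    A = 0 ∧ B = 0 ∧ C = 0 ∧ D = 0 := by
  classical
  have hqne : q ≠ 0 := by intro hh'; rw [hh'] at hq0; simp at hq0
  have hσ0 : σ ≠ 0 := by
    intro hh'; rw [hh'] at hσ; rw [← hσ] at hq0; simp at hq0
  -- the slit plane is open
  have hUopen : IsOpen slitPlane' := by
    have hrw : slitPlane' = {z : ℂ | 0 ≤ z.re ∧ z.im = 0}ᶜ := by
      ext z; simp [slitPlane']
    rw [hrw]
    exact ((isClosed_le continuous_const Complex.continuous_re).inter
      (isClosed_eq Complex.continuous_im continuous_const)).isOpen_compl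
  have hsq : ∀ z ∈ slitPlane', (h z) ^ 2 = z := by
    intro z hz
    rw [hh z, sq, ← Complex.exp_add,
      show (1/2 : ℂ) * Log z + (1/2) * Log z = Log z by ring]
    exact hLog z hz
  have hmem1 : (-1 : ℂ) ∈ slitPlane' := by simp [slitPlane']
  -- the function F on ℂ \ {0}
  set F : ℂ → ℂ := fun w =>
    A * w ^ n * thetaQ q (q ^ N * a * w ^ 2) + B * w ^ m * thetaQ q (-(q ^ M) * a * w ^ 2)
      + C * w ^ l * thetaQ q (σ * q ^ L * a * w ^ 2)
      + D * w ^ k * thetaQ q (-(σ * q ^ K) * a * w ^ 2) with hF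
  have hFz : ∀ z ∈ slitPlane', F (h z) = 0 := by
    intro z hz
    rw [hF]
    simp only
    rw [hsq z hz]
    exact hrel z hz
  -- F is analytic on ℂ \ {0}
  have hFdiff : DifferentiableOn ℂ F {(0:ℂ)}ᶜ := by
    intro w hw
    have hw0 : w ≠ 0 := hw
    apply DifferentiableAt.differentiableWithinAt
    have harg : ∀ c : ℂ, c ≠ 0 → DifferentiableAt ℂ (fun w : ℂ => thetaQ q (c * w ^ 2)) w := by
      intro c hc
      exact (theta_differentiableAt hq1 (c * w ^ 2) (mul_ne_zero hc (pow_ne_zero _ hw0))).comp (f := fun w : ℂ => c * w ^ 2) w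
        (by fun_prop)
    have hzp : ∀ e : ℤ, DifferentiableAt ℂ (fun w : ℂ => w ^ e) w :=
      fun e => differentiableAt_zpow.2 (Or.inl hw0)
    rw [hF]
    apply DifferentiableAt.add
    apply DifferentiableAt.add
    apply DifferentiableAt.add
    · exact ((differentiableAt_const A).mul (hzp n)).mul
        (harg _ (mul_ne_zero (zpow_ne_zero _ hqne) ha))
    · exact ((differentiableAt_const B).mul (hzp m)).mul
        (harg _ (mul_ne_zero (neg_ne_zero.mpr (zpow_ne_zero _ hqne)) ha))
    · exact ((differentiableAt_const C).mul (hzp l)).mul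
        (harg _ (mul_ne_zero (mul_ne_zero hσ0 (zpow_ne_zero _ hqne)) ha))
    · exact ((differentiableAt_const D).mul (hzp k)).mul
        (harg _ (mul_ne_zero (neg_ne_zero.mpr (mul_ne_zero hσ0 (zpow_ne_zero _ hqne))) ha))
  have hFanalytic : AnalyticOnNhd ℂ F {(0:ℂ)}ᶜ :=
    hFdiff.analyticOnNhd isOpen_compl_singleton
  -- the seed sequence
  set u : ℕ → ℂ := fun j => (-1 : ℂ) + ((1/(j+1) : ℝ) : ℂ) * Complex.I with hu
  have humem : ∀ j : ℕ, u j ∈ slitPlane' := by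
    intro j
    simp only [hu, slitPlane', Set.mem_setOf_eq, Complex.add_re, Complex.neg_re,
      Complex.one_re, Complex.mul_re, Complex.ofReal_re, Complex.I_re, Complex.ofReal_im,
      Complex.I_im, not_and]
    intro h0
    norm_num at h0
  have hune : ∀ j : ℕ, u j ≠ -1 := by
    intro j hc
    have : (u j).im = (-1 : ℂ).im := by rw [hc]
    simp only [hu, Complex.add_im, Complex.neg_im, Complex.one_im, Complex.mul_im,
      Complex.ofReal_re, Complex.I_im, Complex.ofReal_im, Complex.I_re] at this
    have hj : (0:ℝ) < 1/(j+1) := by positivity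
    norm_num at this
    linarith
  have htendu : Filter.Tendsto u Filter.atTop (nhds (-1 : ℂ)) := by
    have h1 : Filter.Tendsto (fun j : ℕ => (1/(j+1) : ℝ)) Filter.atTop (nhds 0) :=
      tendsto_one_div_add_atTop_nhds_zero_nat
    have hcont : Continuous (fun t : ℝ => (-1 : ℂ) + (t : ℂ) * Complex.I) := by fun_prop
    have := (hcont.tendsto (0:ℝ)).comp h1
    simpa [hu, Function.comp_def] using this
  have hconth : ContinuousAt h (-1 : ℂ) := by
    have hcl : ContinuousAt Log (-1 : ℂ) :=
      (hLogHolo.continuousOn.continuousAt (hUopen.mem_nhds hmem1))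
    have : ContinuousAt (fun z => Complex.exp ((1/2 : ℂ) * Log z)) (-1 : ℂ) :=
      Complex.continuous_exp.continuousAt.comp (continuousAt_const.mul hcl)
    rwa [show h = fun z => Complex.exp ((1/2 : ℂ) * Log z) from funext hh]
  have hinj : ∀ j : ℕ, h (u j) ≠ h (-1) := by
    intro j hc
    apply hune j
    have := congrArg (fun x : ℂ => x ^ 2) hc
    rw [hsq _ (humem j), hsq _ hmem1] at this
    exact this
  have htendh : Filter.Tendsto (fun j => h (u j)) Filter.atTop (nhds (h (-1))) :=
    hconth.tendsto.comp htendu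
  have htend' : Filter.Tendsto (fun j => h (u j)) Filter.atTop (nhdsWithin (h (-1)) {h (-1)}ᶜ) := by
    apply tendsto_nhdsWithin_of_tendsto_nhds_of_eventually_within _ htendh
    exact Filter.Eventually.of_forall (fun j => hinj j)
  have hfreq : ∃ᶠ w in nhdsWithin (h (-1)) {h (-1)}ᶜ, F w = 0 :=
    htend'.frequently (Filter.Frequently.of_forall (fun j => hFz _ (humem j)))
  have hmemw : h (-1) ∈ ({(0:ℂ)}ᶜ : Set ℂ) := by
    simp only [Set.mem_compl_iff, Set.mem_singleton_iff]
    rw [hh]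
    exact Complex.exp_ne_zero _
  have hpre : IsPreconnected ({(0:ℂ)}ᶜ : Set ℂ) :=
    (isConnected_compl_singleton_of_one_lt_rank
      (by rw [rank_real_complex]; norm_num) 0).isPreconnected
  have hFeq : Set.EqOn F 0 ({(0:ℂ)}ᶜ : Set ℂ) :=
    hFanalytic.eqOn_zero_of_preconnected_of_frequently_eq_zero hpre hmemw hfreq
  have R0 : ∀ w : ℂ, w ≠ 0 →
      A * w ^ n * thetaQ q (q ^ N * a * w ^ 2) + B * w ^ m * thetaQ q (-(q ^ M) * a * w ^ 2)
        + C * w ^ l * thetaQ q (σ * q ^ L * a * w ^ 2)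
        + D * w ^ k * thetaQ q (-(σ * q ^ K) * a * w ^ 2) = 0 := by
    intro w hw
    have := hFeq (by simpa using hw : w ∈ ({(0:ℂ)}ᶜ : Set ℂ))
    rw [hF] at this
    simpa using this
  -- step lemma via the functional equation
  have hstep : ∀ A' B' C' D' : ℂ,
      (∀ w : ℂ, w ≠ 0 → A' * w ^ n * thetaQ q (q ^ N * a * w ^ 2)
        + B' * w ^ m * thetaQ q (-(q ^ M) * a * w ^ 2)
        + C' * w ^ l * thetaQ q (σ * q ^ L * a * w ^ 2)
        + D' * w ^ k * thetaQ q (-(σ * q ^ K) * a * w ^ 2) = 0) →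
      (∀ w : ℂ, w ≠ 0 → (A' * (σ ^ n * σ * q ^ M * q ^ L * q ^ K)) * w ^ n * thetaQ q (q ^ N * a * w ^ 2)
        + (B' * (-(σ ^ m * σ * q ^ N * q ^ L * q ^ K))) * w ^ m * thetaQ q (-(q ^ M) * a * w ^ 2)
        + (C' * (σ ^ l * q ^ N * q ^ M * q ^ K)) * w ^ l * thetaQ q (σ * q ^ L * a * w ^ 2)
        + (D' * (-(σ ^ k * q ^ N * q ^ M * q ^ L))) * w ^ k * thetaQ q (-(σ * q ^ K) * a * w ^ 2) = 0) := by
    intro A' B' C' D' hprev w hw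
    have E := hprev (σ * w) (mul_ne_zero hσ0 hw)
    rw [show (σ * w) ^ 2 = q * w ^ 2 from by rw [mul_pow, hσ]] at E
    rw [show q ^ N * a * (q * w ^ 2) = q * (q ^ N * a * w ^ 2) from by ring,
      show -(q ^ M) * a * (q * w ^ 2) = q * (-(q ^ M) * a * w ^ 2) from by ring,
      show σ * q ^ L * a * (q * w ^ 2) = q * (σ * q ^ L * a * w ^ 2) from by ring,
      show -(σ * q ^ K) * a * (q * w ^ 2) = q * (-(σ * q ^ K) * a * w ^ 2) from by ring,
      mul_zpow, mul_zpow, mul_zpow, mul_zpow] at E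
    have hu1 : q ^ N * a * w ^ 2 ≠ 0 :=
      mul_ne_zero (mul_ne_zero (zpow_ne_zero _ hqne) ha) (pow_ne_zero _ hw)
    have hu2 : -(q ^ M) * a * w ^ 2 ≠ 0 :=
      mul_ne_zero (mul_ne_zero (neg_ne_zero.2 (zpow_ne_zero _ hqne)) ha) (pow_ne_zero _ hw)
    have hu3 : σ * q ^ L * a * w ^ 2 ≠ 0 :=
      mul_ne_zero (mul_ne_zero (mul_ne_zero hσ0 (zpow_ne_zero _ hqne)) ha) (pow_ne_zero _ hw)
    have hu4 : -(σ * q ^ K) * a * w ^ 2 ≠ 0 :=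
      mul_ne_zero (mul_ne_zero (neg_ne_zero.2 (mul_ne_zero hσ0 (zpow_ne_zero _ hqne))) ha)
        (pow_ne_zero _ hw)
    have fe1 := theta_FE hq0 hq1 _ hu1
    have fe2 := theta_FE hq0 hq1 _ hu2
    have fe3 := theta_FE hq0 hq1 _ hu3
    have fe4 := theta_FE hq0 hq1 _ hu4
    linear_combination (-(w ^ 2) * a * σ * q ^ N * q ^ M * q ^ L * q ^ K) * E
      + (A' * (σ ^ n * σ * q ^ M * q ^ L * q ^ K) * w ^ n) * fe1
      + (B' * (-(σ ^ m * σ * q ^ N * q ^ L * q ^ K)) * w ^ m) * fe2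
      + (C' * (σ ^ l * q ^ N * q ^ M * q ^ K) * w ^ l) * fe3
      + (D' * (-(σ ^ k * q ^ N * q ^ M * q ^ L)) * w ^ k) * fe4
  have R1 := hstep A B C D R0
  have R2 := hstep _ _ _ _ R1
  have R3 := hstep _ _ _ _ R2
  -- distinctness of the multipliers
  have hαβ : (σ ^ n * σ * q ^ M * q ^ L * q ^ K) ≠ (-(σ ^ m * σ * q ^ N * q ^ L * q ^ K)) := by
    rw [sigma_form1 hσ hσ0 n M L K, show (-(σ ^ m * σ * q ^ N * q ^ L * q ^ K)) = -(σ ^ (m + 1 + 2*N + 2*L + 2*K)) from by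
      rw [sigma_form1 hσ hσ0 m N L K]]
    exact sigma_zpow_ne_neg_sigma_zpow hσ hq0 hq1 _ _
  have hαδ : (σ ^ n * σ * q ^ M * q ^ L * q ^ K) ≠ (-(σ ^ k * q ^ N * q ^ M * q ^ L)) := by
    rw [sigma_form1 hσ hσ0 n M L K, show (-(σ ^ k * q ^ N * q ^ M * q ^ L)) = -(σ ^ (k + 2*N + 2*M + 2*L)) from by
      rw [sigma_form2 hσ hσ0 k N M L]]
    exact sigma_zpow_ne_neg_sigma_zpow hσ hq0 hq1 _ _
  have hγβ : (σ ^ l * q ^ N * q ^ M * q ^ K) ≠ (-(σ ^ m * σ * q ^ N * q ^ L * q ^ K)) := by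
    rw [sigma_form2 hσ hσ0 l N M K, show (-(σ ^ m * σ * q ^ N * q ^ L * q ^ K)) = -(σ ^ (m + 1 + 2*N + 2*L + 2*K)) from by
      rw [sigma_form1 hσ hσ0 m N L K]]
    exact sigma_zpow_ne_neg_sigma_zpow hσ hq0 hq1 _ _
  have hγδ : (σ ^ l * q ^ N * q ^ M * q ^ K) ≠ (-(σ ^ k * q ^ N * q ^ M * q ^ L)) := by
    rw [sigma_form2 hσ hσ0 l N M K, show (-(σ ^ k * q ^ N * q ^ M * q ^ L)) = -(σ ^ (k + 2*N + 2*M + 2*L)) from by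
      rw [sigma_form2 hσ hσ0 k N M L]]
    exact sigma_zpow_ne_neg_sigma_zpow hσ hq0 hq1 _ _
  -- the A-C relation
  have hAC : ∀ w : ℂ, w ≠ 0 →
      A * w ^ n * thetaQ q (q ^ N * a * w ^ 2) + C * w ^ l * thetaQ q (σ * q ^ L * a * w ^ 2) = 0 := by
    intro w hw
    have h0 := R0 w hw
    have h1 := R1 w hw
    have h2 := R2 w hw
    have h3 := R3 w hw
    by_cases hαγ : (σ ^ n * σ * q ^ M * q ^ L * q ^ K) = (σ ^ l * q ^ N * q ^ M * q ^ K)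
    · rw [← hαγ] at h1 h2
      have comb : (A * w ^ n * thetaQ q (q ^ N * a * w ^ 2) + C * w ^ l * thetaQ q (σ * q ^ L * a * w ^ 2)) *
          (((σ ^ n * σ * q ^ M * q ^ L * q ^ K) - (-(σ ^ m * σ * q ^ N * q ^ L * q ^ K))) * ((σ ^ n * σ * q ^ M * q ^ L * q ^ K) - (-(σ ^ k * q ^ N * q ^ M * q ^ L)))) = 0 := by
        linear_combination h2 - ((-(σ ^ m * σ * q ^ N * q ^ L * q ^ K)) + (-(σ ^ k * q ^ N * q ^ M * q ^ L))) * h1 + ((-(σ ^ m * σ * q ^ N * q ^ L * q ^ K)) * (-(σ ^ k * q ^ N * q ^ M * q ^ L))) * h0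
      exact (mul_eq_zero.mp comb).resolve_right
        (mul_ne_zero (sub_ne_zero.2 hαβ) (sub_ne_zero.2 hαδ))
    · have combA : A * w ^ n * thetaQ q (q ^ N * a * w ^ 2) *
          (((σ ^ n * σ * q ^ M * q ^ L * q ^ K) - (-(σ ^ m * σ * q ^ N * q ^ L * q ^ K))) * ((σ ^ n * σ * q ^ M * q ^ L * q ^ K) - (σ ^ l * q ^ N * q ^ M * q ^ K)) * ((σ ^ n * σ * q ^ M * q ^ L * q ^ K) - (-(σ ^ k * q ^ N * q ^ M * q ^ L)))) = 0 := by
        linear_combination h3 - ((-(σ ^ m * σ * q ^ N * q ^ L * q ^ K)) + (σ ^ l * q ^ N * q ^ M * q ^ K) + (-(σ ^ k * q ^ N * q ^ M * q ^ L))) * h2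
          + ((-(σ ^ m * σ * q ^ N * q ^ L * q ^ K)) * (σ ^ l * q ^ N * q ^ M * q ^ K) + (-(σ ^ m * σ * q ^ N * q ^ L * q ^ K)) * (-(σ ^ k * q ^ N * q ^ M * q ^ L)) + (σ ^ l * q ^ N * q ^ M * q ^ K) * (-(σ ^ k * q ^ N * q ^ M * q ^ L))) * h1 - ((-(σ ^ m * σ * q ^ N * q ^ L * q ^ K)) * (σ ^ l * q ^ N * q ^ M * q ^ K) * (-(σ ^ k * q ^ N * q ^ M * q ^ L))) * h0
      have combC : C * w ^ l * thetaQ q (σ * q ^ L * a * w ^ 2) *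
          (((σ ^ l * q ^ N * q ^ M * q ^ K) - (σ ^ n * σ * q ^ M * q ^ L * q ^ K)) * ((σ ^ l * q ^ N * q ^ M * q ^ K) - (-(σ ^ m * σ * q ^ N * q ^ L * q ^ K))) * ((σ ^ l * q ^ N * q ^ M * q ^ K) - (-(σ ^ k * q ^ N * q ^ M * q ^ L)))) = 0 := by
        linear_combination h3 - ((σ ^ n * σ * q ^ M * q ^ L * q ^ K) + (-(σ ^ m * σ * q ^ N * q ^ L * q ^ K)) + (-(σ ^ k * q ^ N * q ^ M * q ^ L))) * h2
          + ((σ ^ n * σ * q ^ M * q ^ L * q ^ K) * (-(σ ^ m * σ * q ^ N * q ^ L * q ^ K)) + (σ ^ n * σ * q ^ M * q ^ L * q ^ K) * (-(σ ^ k * q ^ N * q ^ M * q ^ L)) + (-(σ ^ m * σ * q ^ N * q ^ L * q ^ K)) * (-(σ ^ k * q ^ N * q ^ M * q ^ L))) * h1 - ((σ ^ n * σ * q ^ M * q ^ L * q ^ K) * (-(σ ^ m * σ * q ^ N * q ^ L * q ^ K)) * (-(σ ^ k * q ^ N * q ^ M * q ^ L))) * h0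
      have hA' : A * w ^ n * thetaQ q (q ^ N * a * w ^ 2) = 0 :=
        (mul_eq_zero.mp combA).resolve_right (mul_ne_zero (mul_ne_zero
          (sub_ne_zero.2 hαβ) (sub_ne_zero.2 hαγ)) (sub_ne_zero.2 hαδ))
      have hC' : C * w ^ l * thetaQ q (σ * q ^ L * a * w ^ 2) = 0 :=
        (mul_eq_zero.mp combC).resolve_right (mul_ne_zero (mul_ne_zero
          (sub_ne_zero.2 (Ne.symm hαγ)) (sub_ne_zero.2 hγβ)) (sub_ne_zero.2 hγδ))
      linear_combination hA' + hC'
  -- the B-D relation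
  have hBD : ∀ w : ℂ, w ≠ 0 →
      B * w ^ m * thetaQ q (-(q ^ M) * a * w ^ 2) + D * w ^ k * thetaQ q (-(σ * q ^ K) * a * w ^ 2) = 0 := by
    intro w hw
    have h0 := R0 w hw
    have h1 := R1 w hw
    have h2 := R2 w hw
    have h3 := R3 w hw
    by_cases hβδ : (-(σ ^ m * σ * q ^ N * q ^ L * q ^ K)) = (-(σ ^ k * q ^ N * q ^ M * q ^ L))
    · rw [← hβδ] at h1 h2
      have comb : (B * w ^ m * thetaQ q (-(q ^ M) * a * w ^ 2) + D * w ^ k * thetaQ q (-(σ * q ^ K) * a * w ^ 2)) *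
          (((-(σ ^ m * σ * q ^ N * q ^ L * q ^ K)) - (σ ^ n * σ * q ^ M * q ^ L * q ^ K)) * ((-(σ ^ m * σ * q ^ N * q ^ L * q ^ K)) - (σ ^ l * q ^ N * q ^ M * q ^ K))) = 0 := by
        linear_combination h2 - ((σ ^ n * σ * q ^ M * q ^ L * q ^ K) + (σ ^ l * q ^ N * q ^ M * q ^ K)) * h1 + ((σ ^ n * σ * q ^ M * q ^ L * q ^ K) * (σ ^ l * q ^ N * q ^ M * q ^ K)) * h0
      exact (mul_eq_zero.mp comb).resolve_right
        (mul_ne_zero (sub_ne_zero.2 (Ne.symm hαβ)) (sub_ne_zero.2 (Ne.symm hγβ)))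
    · have combB : B * w ^ m * thetaQ q (-(q ^ M) * a * w ^ 2) *
          (((-(σ ^ m * σ * q ^ N * q ^ L * q ^ K)) - (σ ^ n * σ * q ^ M * q ^ L * q ^ K)) * ((-(σ ^ m * σ * q ^ N * q ^ L * q ^ K)) - (σ ^ l * q ^ N * q ^ M * q ^ K)) * ((-(σ ^ m * σ * q ^ N * q ^ L * q ^ K)) - (-(σ ^ k * q ^ N * q ^ M * q ^ L)))) = 0 := by
        linear_combination h3 - ((σ ^ n * σ * q ^ M * q ^ L * q ^ K) + (σ ^ l * q ^ N * q ^ M * q ^ K) + (-(σ ^ k * q ^ N * q ^ M * q ^ L))) * h2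
          + ((σ ^ n * σ * q ^ M * q ^ L * q ^ K) * (σ ^ l * q ^ N * q ^ M * q ^ K) + (σ ^ n * σ * q ^ M * q ^ L * q ^ K) * (-(σ ^ k * q ^ N * q ^ M * q ^ L)) + (σ ^ l * q ^ N * q ^ M * q ^ K) * (-(σ ^ k * q ^ N * q ^ M * q ^ L))) * h1 - ((σ ^ n * σ * q ^ M * q ^ L * q ^ K) * (σ ^ l * q ^ N * q ^ M * q ^ K) * (-(σ ^ k * q ^ N * q ^ M * q ^ L))) * h0
      have combD : D * w ^ k * thetaQ q (-(σ * q ^ K) * a * w ^ 2) *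
          (((-(σ ^ k * q ^ N * q ^ M * q ^ L)) - (σ ^ n * σ * q ^ M * q ^ L * q ^ K)) * ((-(σ ^ k * q ^ N * q ^ M * q ^ L)) - (-(σ ^ m * σ * q ^ N * q ^ L * q ^ K))) * ((-(σ ^ k * q ^ N * q ^ M * q ^ L)) - (σ ^ l * q ^ N * q ^ M * q ^ K))) = 0 := by
        linear_combination h3 - ((σ ^ n * σ * q ^ M * q ^ L * q ^ K) + (-(σ ^ m * σ * q ^ N * q ^ L * q ^ K)) + (σ ^ l * q ^ N * q ^ M * q ^ K)) * h2
          + ((σ ^ n * σ * q ^ M * q ^ L * q ^ K) * (-(σ ^ m * σ * q ^ N * q ^ L * q ^ K)) + (σ ^ n * σ * q ^ M * q ^ L * q ^ K) * (σ ^ l * q ^ N * q ^ M * q ^ K) + (-(σ ^ m * σ * q ^ N * q ^ L * q ^ K)) * (σ ^ l * q ^ N * q ^ M * q ^ K)) * h1 - ((σ ^ n * σ * q ^ M * q ^ L * q ^ K) * (-(σ ^ m * σ * q ^ N * q ^ L * q ^ K)) * (σ ^ l * q ^ N * q ^ M * q ^ K)) * h0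
      have hB' : B * w ^ m * thetaQ q (-(q ^ M) * a * w ^ 2) = 0 :=
        (mul_eq_zero.mp combB).resolve_right (mul_ne_zero (mul_ne_zero
          (sub_ne_zero.2 (Ne.symm hαβ)) (sub_ne_zero.2 (Ne.symm hγβ))) (sub_ne_zero.2 hβδ))
      have hD' : D * w ^ k * thetaQ q (-(σ * q ^ K) * a * w ^ 2) = 0 :=
        (mul_eq_zero.mp combD).resolve_right (mul_ne_zero (mul_ne_zero
          (sub_ne_zero.2 (Ne.symm hαδ)) (sub_ne_zero.2 (Ne.symm hβδ))) (sub_ne_zero.2 (Ne.symm hγδ)))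
      linear_combination hB' + hD'
  -- final evaluations
  have hqN : q ^ N ≠ 0 := zpow_ne_zero _ hqne
  have hqM : q ^ M ≠ 0 := zpow_ne_zero _ hqne
  have hu1c : q ^ N * a ≠ 0 := mul_ne_zero hqN ha
  have hu2c : -(q ^ M) * a ≠ 0 := mul_ne_zero (neg_ne_zero.2 hqM) ha
  have hC0 : C = 0 := by
    obtain ⟨w1, hw1ne, hw1sq⟩ := exists_sqrt ((q ^ N * a)⁻¹) (inv_ne_zero hu1c)
    have hthis := hAC w1 hw1ne
    have harg1 : q ^ N * a * w1 ^ 2 = 1 := by rw [hw1sq]; exact mul_inv_cancel₀ hu1c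
    have harg3 : σ * q ^ L * a * w1 ^ 2 = σ * q ^ (L - N) := by
      rw [hw1sq, zpow_sub₀ hqne]
      field_simp
    rw [harg1, harg3, theta_one_eq_zero hq0 hq1] at hthis
    have h' : C * (w1 ^ l * thetaQ q (σ * q ^ (L - N))) = 0 := by linear_combination hthis
    exact (mul_eq_zero.mp h').resolve_right
      (mul_ne_zero (zpow_ne_zero _ hw1ne) (theta_sigma_ne_zero hσ hq0 hq1 (L - N)))
  have hA0 : A = 0 := by
    obtain ⟨w2, hw2ne, hw2sq⟩ := exists_sqrt (σ * (q ^ N * a)⁻¹)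
      (mul_ne_zero hσ0 (inv_ne_zero hu1c))
    have hthis := hAC w2 hw2ne
    have harg1 : q ^ N * a * w2 ^ 2 = σ * q ^ (0:ℤ) := by
      rw [hw2sq, zpow_zero, mul_one]
      field_simp
    rw [harg1, hC0] at hthis
    have h' : A * (w2 ^ n * thetaQ q (σ * q ^ (0:ℤ))) = 0 := by linear_combination hthis
    exact (mul_eq_zero.mp h').resolve_right
      (mul_ne_zero (zpow_ne_zero _ hw2ne) (theta_sigma_ne_zero hσ hq0 hq1 0))
  have hD0 : D = 0 := by
    obtain ⟨w3, hw3ne, hw3sq⟩ := exists_sqrt ((-(q ^ M) * a)⁻¹) (inv_ne_zero hu2c)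
    have hthis := hBD w3 hw3ne
    have harg2 : -(q ^ M) * a * w3 ^ 2 = 1 := by rw [hw3sq]; exact mul_inv_cancel₀ hu2c
    have harg4 : -(σ * q ^ K) * a * w3 ^ 2 = σ * q ^ (K - M) := by
      rw [hw3sq, zpow_sub₀ hqne]
      field_simp
    rw [harg2, harg4, theta_one_eq_zero hq0 hq1] at hthis
    have h' : D * (w3 ^ k * thetaQ q (σ * q ^ (K - M))) = 0 := by linear_combination hthis
    exact (mul_eq_zero.mp h').resolve_right
      (mul_ne_zero (zpow_ne_zero _ hw3ne) (theta_sigma_ne_zero hσ hq0 hq1 (K - M)))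
  have hB0 : B = 0 := by
    obtain ⟨w4, hw4ne, hw4sq⟩ := exists_sqrt (σ * (-(q ^ M) * a)⁻¹)
      (mul_ne_zero hσ0 (inv_ne_zero hu2c))
    have hthis := hBD w4 hw4ne
    have harg2 : -(q ^ M) * a * w4 ^ 2 = σ * q ^ (0:ℤ) := by
      rw [hw4sq, zpow_zero, mul_one]
      field_simp
    rw [harg2, hD0] at hthis
    have h' : B * (w4 ^ m * thetaQ q (σ * q ^ (0:ℤ))) = 0 := by linear_combination hthis
    exact (mul_eq_zero.mp h').resolve_right
      (mul_ne_zero (zpow_ne_zero _ hw4ne) (theta_sigma_ne_zero hσ hq0 hq1 0))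
  exact ⟨hA0, hB0, hC0, hD0⟩
end

section
/- Let q ∈ ℂ with 0 < |q| < 1, let a, b, c ∈ ℂ∖{0}, and define Ψ(z) = θ_q(b)θ_q(c/a)θ_q(az)θ_q((bq/c)z) − θ_q(c/b)θ_q(a)θ_q((aq/c)z)θ_q(bz) for z ∈ ℂ∖{0}. Then Ψ vanishes on q^ℤ and on (c/(abq))·q^ℤ; that is, Ψ(qⁿ) = 0 and Ψ((c/(abq))·qⁿ) = 0 for every n ∈ ℤ. -/
/-- The function
`Ψ(z) = θ_q(b)θ_q(c/a)θ_q(az)θ_q((bq/c)z) − θ_q(c/b)θ_q(a)θ_q((aq/c)z)θ_q(bz)`. -/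
noncomputable def PsiAux (q a b c z : ℂ) : ℂ :=
  thetaQ q b * thetaQ q (c / a) * thetaQ q (a * z) * thetaQ q (b * q / c * z)
    - thetaQ q (c / b) * thetaQ q a * thetaQ q (a * q / c * z) * thetaQ q (b * z)

open Filter Complex

/-- Multipliability of the q-Pochhammer product. -/
lemma qPoch_multipliable (q x : ℂ) (hq1 : ‖q‖ < 1) :
    Multipliable (fun k : ℕ => 1 - x * q ^ k) := by
  have hsum : Summable (fun k : ℕ => ‖x * q ^ k‖) := by
    have := (summable_geometric_of_lt_one (norm_nonneg q)
      (by exact hq1)).mul_left ‖x‖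
    simpa [norm_mul, norm_pow] using this
  have h0 : Tendsto (fun k : ℕ => ‖x * q ^ k‖) atTop (nhds 0) := hsum.tendsto_atTop_zero
  have hev : ∀ᶠ n in atTop, ‖x * q ^ n‖ ≤ 1/2 :=
    h0.eventually (eventually_le_nhds (by norm_num))
  obtain ⟨k0, hk0⟩ := eventually_atTop.mp hev
  apply Multipliable.comp_nat_add (k := k0)
  have hne : ∀ (_ : Unit) (n : ℕ), (fun n (_ : Unit) => 1 - x * q ^ (n + k0)) n () ≠ 0 := by
    intro _ n
    simp only
    intro h
    have : x * q ^ (n + k0) = 1 := by linear_combination -h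
    have h2 := hk0 (n + k0) (Nat.le_add_left _ _)
    rw [this] at h2
    norm_num at h2
  have hlog : ∀ (_ : Unit), Summable fun n : ℕ =>
      Complex.log ((fun n (_ : Unit) => 1 - x * q ^ (n + k0)) n ()) := by
    intro _
    apply Summable.of_norm_bounded (g := fun n : ℕ => 3/2 * ‖x * q ^ (n + k0)‖)
    · exact ((summable_nat_add_iff k0).2 hsum).mul_left _
    · intro n
      have hb : ‖-(x * q ^ (n + k0))‖ ≤ 1/2 := by
        rw [norm_neg]; exact hk0 (n + k0) (Nat.le_add_left _ _)
      have := Complex.norm_log_one_add_half_le_self hb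
      simp only [norm_neg] at this
      calc ‖Complex.log (1 - x * q ^ (n + k0))‖
          = ‖Complex.log (1 + -(x * q ^ (n + k0)))‖ := by rw [sub_eq_add_neg]
        _ ≤ 3/2 * ‖x * q ^ (n + k0)‖ := this
  exact Complex.multipliable_of_summable_log (hlog ())

set_option maxHeartbeats 1000000 in
/-- Peel off the first factor of the q-Pochhammer product. -/
lemma qPochInf_peel (q x : ℂ) (hq1 : ‖q‖ < 1) :
    qPochInf q x = (1 - x) * qPochInf q (q * x) := by
  have hm : Multipliable (fun n : ℕ => 1 - x * q ^ (n + 1)) := by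
    have h2 := qPoch_multipliable q (q * x) hq1
    apply h2.congr
    intro n; ring
  unfold qPochInf
  rw [tprod_eq_zero_mul' hm]
  simp only [pow_zero, mul_one]
  congr 1
  exact tprod_congr fun n => by ring

lemma qPochInf_one (q : ℂ) (hq1 : ‖q‖ < 1) : qPochInf q 1 = 0 := by
  rw [qPochInf_peel q 1 hq1]; ring

lemma thetaQ_sym (q z : ℂ) (hq : q ≠ 0) (hz : z ≠ 0) : thetaQ q (q / z) = thetaQ q z := by
  unfold thetaQ
  have e : q / (q / z) = z := by field_simp
  rw [e]
  ring

lemma thetaQ_shift (q z : ℂ) (hq : q ≠ 0) (hq1 : ‖q‖ < 1) (hz : z ≠ 0) :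
    thetaQ q (q * z) = -z⁻¹ * thetaQ q z := by
  by_cases h1 : z = 1
  · subst h1
    unfold thetaQ
    rw [mul_one, div_one, div_self hq, qPochInf_one q hq1]
    ring
  · have hz1 : (1 : ℂ) - z ≠ 0 := by
      intro h; apply h1; linear_combination -h
    have key : (1 - z) * thetaQ q (q * z) = (1 - z⁻¹) * thetaQ q z := by
      unfold thetaQ
      have e1 : q / (q * z) = z⁻¹ := by field_simp
      have e2 : q / z = q * z⁻¹ := div_eq_mul_inv q z
      rw [e1, e2, qPochInf_peel q z hq1, qPochInf_peel q z⁻¹ hq1]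
      ring
    have key2 : (1 - z) * thetaQ q (q * z) = (1 - z) * (-z⁻¹ * thetaQ q z) := by
      rw [key]; field_simp; ring
    exact mul_left_cancel₀ hz1 key2

section
variable (q a b c : ℂ) (hq : q ≠ 0) (hq1 : ‖q‖ < 1)
  (ha : a ≠ 0) (hb : b ≠ 0) (hc : c ≠ 0)

include hq hq1 ha hb hc in
lemma psi_step (z : ℂ) (hz : z ≠ 0) :
    PsiAux q a b c (q * z) = (c / (a * b * q) * z⁻¹ * z⁻¹) * PsiAux q a b c z := by
  unfold PsiAux
  rw [show a * (q * z) = q * (a * z) by ring,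
      show b * q / c * (q * z) = q * (b * q / c * z) by ring,
      show a * q / c * (q * z) = q * (a * q / c * z) by ring,
      show b * (q * z) = q * (b * z) by ring,
      thetaQ_shift q _ hq hq1 (mul_ne_zero ha hz),
      thetaQ_shift q _ hq hq1 (mul_ne_zero (div_ne_zero (mul_ne_zero hb hq) hc) hz),
      thetaQ_shift q _ hq hq1 (mul_ne_zero (div_ne_zero (mul_ne_zero ha hq) hc) hz),
      thetaQ_shift q _ hq hq1 (mul_ne_zero hb hz)]
  have hd : a * b * q * z * z ≠ 0 :=
    mul_ne_zero (mul_ne_zero (mul_ne_zero (mul_ne_zero ha hb) hq) hz) hz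
  have k1 : (a * z)⁻¹ * (b * q / c * z)⁻¹ = c / (a * b * q) * z⁻¹ * z⁻¹ := by
    field_simp
  have k2 : (a * q / c * z)⁻¹ * (b * z)⁻¹ = c / (a * b * q) * z⁻¹ * z⁻¹ := by
    field_simp
  linear_combination
    (thetaQ q b * thetaQ q (c / a) * thetaQ q (a * z) * thetaQ q (b * q / c * z)) * k1
    - (thetaQ q (c / b) * thetaQ q a * thetaQ q (a * q / c * z) * thetaQ q (b * z)) * k2

omit hq1 in
include hq ha hb hc in
lemma psi_base1 : PsiAux q a b c 1 = 0 := by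
  unfold PsiAux
  have s1 : thetaQ q (b * q / c) = thetaQ q (c / b) := by
    rw [show b * q / c = q / (c / b) by field_simp, thetaQ_sym q _ hq (div_ne_zero hc hb)]
  have s2 : thetaQ q (a * q / c) = thetaQ q (c / a) := by
    rw [show a * q / c = q / (c / a) by field_simp, thetaQ_sym q _ hq (div_ne_zero hc ha)]
  rw [mul_one, mul_one, mul_one, mul_one, s1, s2]
  ring

include hq hq1 ha hb hc in
lemma psi_base2 : PsiAux q a b c (c / (a * b * q)) = 0 := by
  have habq : a * b * q ≠ 0 := mul_ne_zero (mul_ne_zero ha hb) hq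
  have s1 : thetaQ q (b * q / c) = thetaQ q (c / b) := by
    rw [show b * q / c = q / (c / b) by field_simp, thetaQ_sym q _ hq (div_ne_zero hc hb)]
  have s2 : thetaQ q (a * q / c) = thetaQ q (c / a) := by
    rw [show a * q / c = q / (c / a) by field_simp, thetaQ_sym q _ hq (div_ne_zero hc ha)]
  unfold PsiAux
  have t1 : thetaQ q (a * (c / (a * b * q))) = -(b * q / c)⁻¹ * thetaQ q (c / b) := by
    rw [show a * (c / (a * b * q)) = q / (q * (b * q / c)) by field_simp,
        thetaQ_sym q _ hq (mul_ne_zero hq (div_ne_zero (mul_ne_zero hb hq) hc)),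
        thetaQ_shift q _ hq hq1 (div_ne_zero (mul_ne_zero hb hq) hc), s1]
  have t2 : thetaQ q (b * q / c * (c / (a * b * q))) = -a⁻¹ * thetaQ q a := by
    rw [show b * q / c * (c / (a * b * q)) = q / (q * a) by field_simp,
        thetaQ_sym q _ hq (mul_ne_zero hq ha),
        thetaQ_shift q _ hq hq1 ha]
  have t3 : thetaQ q (a * q / c * (c / (a * b * q))) = -b⁻¹ * thetaQ q b := by
    rw [show a * q / c * (c / (a * b * q)) = q / (q * b) by field_simp,
        thetaQ_sym q _ hq (mul_ne_zero hq hb),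
        thetaQ_shift q _ hq hq1 hb]
  have t4 : thetaQ q (b * (c / (a * b * q))) = -(a * q / c)⁻¹ * thetaQ q (c / a) := by
    rw [show b * (c / (a * b * q)) = q / (q * (a * q / c)) by field_simp,
        thetaQ_sym q _ hq (mul_ne_zero hq (div_ne_zero (mul_ne_zero ha hq) hc)),
        thetaQ_shift q _ hq hq1 (div_ne_zero (mul_ne_zero ha hq) hc), s2]
  rw [t1, t2, t3, t4]
  field_simp
  ring

end

/-- `Ψ` vanishes on `q^ℤ` and on `(c/(abq)) q^ℤ`. -/
theorem PsiAux_vanishes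
    (q : ℂ) (hq0 : 0 < ‖q‖) (hq1 : ‖q‖ < 1)
    (a b c : ℂ) (ha : a ≠ 0) (hb : b ≠ 0) (hc : c ≠ 0) (n : ℤ) :
    PsiAux q a b c (q ^ n) = 0 ∧ PsiAux q a b c (c / (a * b * q) * q ^ n) = 0 := by
  have hq : q ≠ 0 := by
    intro h; rw [h] at hq0; simp at hq0
  have hK : ∀ z : ℂ, z ≠ 0 → c / (a * b * q) * z⁻¹ * z⁻¹ ≠ 0 := by
    intro z hz
    exact mul_ne_zero (mul_ne_zero (div_ne_zero hc
      (mul_ne_zero (mul_ne_zero ha hb) hq)) (inv_ne_zero hz)) (inv_ne_zero hz)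
  have main : ∀ w : ℂ, w ≠ 0 → PsiAux q a b c w = 0 →
      ∀ m : ℤ, PsiAux q a b c (w * q ^ m) = 0 := by
    intro w hw h0 m
    induction m using Int.induction_on with
    | zero => simpa using h0
    | succ k ih =>
      have e : w * q ^ ((k : ℤ) + 1) = q * (w * q ^ (k : ℤ)) := by
        rw [zpow_add_one₀ hq]; ring
      rw [e, psi_step q a b c hq hq1 ha hb hc _ (mul_ne_zero hw (zpow_ne_zero _ hq)), ih,
        mul_zero]
    | pred k ih =>
      have e : w * q ^ (-(k : ℤ)) = q * (w * q ^ (-(k : ℤ) - 1)) := by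
        rw [show (-(k : ℤ)) = (-(k : ℤ) - 1) + 1 by ring, zpow_add_one₀ hq]; ring
      rw [e, psi_step q a b c hq hq1 ha hb hc _ (mul_ne_zero hw (zpow_ne_zero _ hq))] at ih
      rcases mul_eq_zero.mp ih with h | h
      · exact absurd h (hK _ (mul_ne_zero hw (zpow_ne_zero _ hq)))
      · exact h
  constructor
  · have := main 1 one_ne_zero (psi_base1 q a b c hq ha hb hc) n
    rwa [one_mul] at this
  · exact main (c / (a * b * q)) (div_ne_zero hc (mul_ne_zero (mul_ne_zero ha hb) hq))
      (psi_base2 q a b c hq hq1 ha hb hc) n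
end

section
/- Let q ∈ ℂ with 0 < |q| < 1, let a ∈ ℂ∖{0}, and let λ ∈ ℂ. If θ_q(a) + λ·θ_q(−a) = 0 and θ_q(aq) + λ·θ_q(−aq) = 0, then θ_q(a) = 0 (equivalently, a ∈ q^ℤ). -/
/-- The q-Pochhammer factors form a multipliable family when `|q| < 1`. -/
lemma multipliable_qPoch {q : ℂ} (hq1 : ‖q‖ < 1) (x : ℂ) :
    Multipliable fun k : ℕ => 1 - x * q ^ k := by
  by_cases h0 : ∀ k : ℕ, 1 - x * q ^ k ≠ 0
  · -- all factors nonzero: use summability of logarithms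
    have hsum : Summable fun n : ℕ => Complex.log (1 - x * q ^ n) := by
      have hgeo : Summable fun n : ℕ => ‖q‖ ^ n :=
        summable_geometric_of_lt_one (norm_nonneg q) hq1
      have hg : Summable fun n : ℕ => (3 / 2 : ℝ) * (‖x‖ * ‖q‖ ^ n) :=
        (hgeo.mul_left _).mul_left _
      apply Summable.of_norm_bounded_eventually_nat hg
      have htend : Filter.Tendsto (fun n : ℕ => ‖x‖ * ‖q‖ ^ n)
          Filter.atTop (nhds 0) := by
        simpa using (tendsto_pow_atTop_nhds_zero_of_lt_one (norm_nonneg q)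
          hq1).const_mul (‖x‖)
      have hev : ∀ᶠ n : ℕ in Filter.atTop, ‖x‖ * ‖q‖ ^ n ≤ 1 / 2 := by
        have := htend.eventually (eventually_le_nhds (by norm_num : (0:ℝ) < 1 / 2))
        exact this
      filter_upwards [hev] with n hn
      have hz : ‖(-(x * q ^ n) : ℂ)‖ ≤ 1 / 2 := by
        simpa [norm_neg, map_mul, map_pow] using hn
      have h := Complex.norm_log_one_add_half_le_self hz
      have hrw : (1 : ℂ) + -(x * q ^ n) = 1 - x * q ^ n := by ring
      rw [hrw] at h
      refine h.trans ?_
      simp [norm_neg, map_mul, map_pow, le_refl]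
    exact Complex.multipliable_of_summable_log hsum
  · -- some factor vanishes: the product converges to 0
    push_neg at h0
    obtain ⟨k, hk⟩ := h0
    refine ⟨0, ?_⟩
    have heq : (fun s : Finset ℕ => ∏ i ∈ s, (1 - x * q ^ i)) =ᶠ[Filter.atTop]
        fun _ => (0 : ℂ) := by
      filter_upwards [Filter.eventually_ge_atTop ({k} : Finset ℕ)] with s hs
      exact Finset.prod_eq_zero (hs (Finset.mem_singleton_self k)) hk
    exact Filter.Tendsto.congr' heq.symm tendsto_const_nhds

/-- Splitting off the first factor: `(x;q)_∞ = (1-x)(xq;q)_∞`. -/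
lemma qPochInf_split {q : ℂ} (hq1 : ‖q‖ < 1) (x : ℂ) :
    qPochInf q x = (1 - x) * qPochInf q (x * q) := by
  have hm : Multipliable fun n : ℕ => 1 - x * q ^ (n + 1) := by
    refine (multipliable_qPoch hq1 (x * q)).congr fun n => ?_
    ring
  have h := tprod_eq_zero_mul' (f := fun k : ℕ => 1 - x * q ^ k) hm
  simp only [pow_zero, mul_one] at h
  rw [qPochInf, h, qPochInf]
  congr 1
  refine tprod_congr fun n => ?_
  ring

/-- The quasi-periodicity relation `z·θ_q(zq) = -θ_q(z)`. -/
lemma thetaQ_qmul {q : ℂ} (hq0 : 0 < ‖q‖) (hq1 : ‖q‖ < 1)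
    {z : ℂ} (hz : z ≠ 0) : z * thetaQ q (z * q) = -thetaQ q z := by
  have hqne : q ≠ 0 := by
    intro h; rw [h] at hq0; simp at hq0
  have h1 : q / (z * q) = z⁻¹ := by
    field_simp
  have h2 : qPochInf q z⁻¹ = (1 - z⁻¹) * qPochInf q (q / z) := by
    have := qPochInf_split hq1 z⁻¹
    rwa [show z⁻¹ * q = q / z by field_simp] at this
  have h3 : qPochInf q z = (1 - z) * qPochInf q (z * q) := qPochInf_split hq1 z
  rw [thetaQ, thetaQ, h1, h2, h3]
  have hz1 : z * (1 - z⁻¹) = z - 1 := by field_simp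
  ring_nf
  field_simp
  ring

/-- If `θ_q(a) + λθ_q(-a) = 0` and `θ_q(aq) + λθ_q(-aq) = 0` then `θ_q(a) = 0`. -/
theorem thetaQ_two_term_relation_forces_zero
    (q : ℂ) (hq0 : 0 < ‖q‖) (hq1 : ‖q‖ < 1)
    (a : ℂ) (ha : a ≠ 0) (lam : ℂ)
    (h1 : thetaQ q a + lam * thetaQ q (-a) = 0)
    (h2 : thetaQ q (a * q) + lam * thetaQ q (-(a * q)) = 0) :
    thetaQ q a = 0 := by
  have ka : a * thetaQ q (a * q) = -thetaQ q a := thetaQ_qmul hq0 hq1 ha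
  have kb : (-a) * thetaQ q ((-a) * q) = -thetaQ q (-a) :=
    thetaQ_qmul hq0 hq1 (neg_ne_zero.mpr ha)
  have hrw : -(a * q) = (-a) * q := by ring
  rw [hrw] at h2
  -- multiply h2 by a
  have h2' : a * thetaQ q (a * q) + lam * (a * thetaQ q ((-a) * q)) = 0 := by
    have := congrArg (fun w => a * w) h2
    simpa [mul_add, mul_comm, mul_left_comm, mul_assoc] using this
  have hab : a * thetaQ q ((-a) * q) = thetaQ q (-a) := by
    have : -((-a) * thetaQ q ((-a) * q)) = -(-thetaQ q (-a)) := by rw [kb]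
    simpa using this
  rw [ka, hab] at h2'
  -- now: -θ(a) + λθ(-a) = 0 and θ(a) + λθ(-a) = 0
  have : (2 : ℂ) * thetaQ q a = 0 := by linear_combination h1 - h2'
  have h2ne : (2 : ℂ) ≠ 0 := two_ne_zero
  exact (mul_eq_zero.mp this).resolve_left h2ne
end

section
/- Let q ∈ ℂ with 0 < |q| < 1 and let a ∈ ℂ∖{0}. Then the functions z ↦ θ_q(az) and z ↦ θ_q(−az) on ℂ∖{0} are linearly independent over ℂ; that is, if A, B ∈ ℂ and A·θ_q(az) + B·θ_q(−az) = 0 for all z ∈ ℂ∖{0}, then A = B = 0. -/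
/-- If some factor is zero, the (complex) tprod is zero. -/
lemma tprod_eq_zero_of_factor {f : ℕ → ℂ} (i : ℕ) (h : f i = 0) : ∏' k, f k = 0 := by
  have heq : (fun s : Finset ℕ => ∏ k ∈ s, f k) =ᶠ[Filter.atTop] fun _ => 0 := by
    filter_upwards [Filter.eventually_ge_atTop ({i} : Finset ℕ)] with s hs
    exact Finset.prod_eq_zero (hs (Finset.mem_singleton_self i)) h
  have hp : HasProd f 0 := tendsto_const_nhds.congr' heq.symm
  exact hp.tprod_eq

lemma hasProd_exp {f : ℕ → ℂ} {S : ℂ} (h : HasSum f S) :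
    HasProd (fun i => Complex.exp (f i)) (Complex.exp S) := by
  have := (Complex.continuous_exp.tendsto S).comp h
  refine this.congr fun s => ?_
  simp [Function.comp, Complex.exp_sum]

/-- If all factors are nonzero and |q|<1, the q-Pochhammer product is nonzero. -/
lemma qPochInf_ne_zero {q x : ℂ} (hq1 : ‖q‖ < 1)
    (h : ∀ k : ℕ, 1 - x * q ^ k ≠ 0) : qPochInf q x ≠ 0 := by
  set f : ℕ → ℂ := fun k => 1 - x * q ^ k with hf
  obtain ⟨N, hN⟩ : ∃ N : ℕ, ‖x‖ * ‖q‖ ^ N ≤ 1 / 2 := by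
    rcases eq_or_ne x 0 with hx | hx
    · exact ⟨0, by simp [hx]⟩
    · have hxpos : 0 < ‖x‖ := by
        simpa [norm_pos_iff] using hx
      obtain ⟨N, hN⟩ := exists_pow_lt_of_lt_one
        (show (0:ℝ) < 1 / (2 * ‖x‖) by positivity) hq1
      refine ⟨N, ?_⟩
      have h2 := hN.le
      rw [le_div_iff₀ (by positivity)] at h2
      nlinarith [pow_nonneg (norm_nonneg q) N]
  -- the tail terms x * q^(k+N) are small
  have hsmall : ∀ k : ℕ, ‖-(x * q ^ (k + N))‖ ≤ (1/2) * ‖q‖ ^ k := by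
    intro k
    rw [norm_neg, norm_mul, norm_pow, pow_add]
    have h1 : ‖q‖ ^ k ≤ 1 := pow_le_one₀ (norm_nonneg q) hq1.le
    calc ‖x‖ * (‖q‖ ^ k * ‖q‖ ^ N)
        = (‖x‖ * ‖q‖ ^ N) * ‖q‖ ^ k := by ring
      _ ≤ (1/2) * ‖q‖ ^ k := by
          apply mul_le_mul_of_nonneg_right hN (pow_nonneg (norm_nonneg q) k)
  -- summability of logs of tail
  have hsum : Summable (fun k => Complex.log (f (k + N))) := by
    apply Summable.of_norm_bounded
      (g := fun k => (3/2) * ((1/2) * ‖q‖ ^ k))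
      (((summable_geometric_of_lt_one (norm_nonneg q) hq1).mul_left (1/2)).mul_left (3/2))
    intro k
    have hk : ‖-(x * q ^ (k + N))‖ ≤ 1/2 := by
      refine (hsmall k).trans ?_
      have : ‖q‖ ^ k ≤ 1 := pow_le_one₀ (norm_nonneg q) hq1.le
      nlinarith
    have : f (k + N) = 1 + -(x * q ^ (k + N)) := by simp [hf]; ring
    rw [this]
    calc ‖Complex.log (1 + -(x * q ^ (k + N)))‖
        ≤ (3/2) * ‖-(x * q ^ (k + N))‖ := Complex.norm_log_one_add_half_le_self hk
      _ ≤ (3/2) * ((1/2) * ‖q‖ ^ k) := by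
          have := hsmall k
          linarith
  obtain ⟨S, hS⟩ := hsum
  have hprod : HasProd (fun k => f (k + N)) (Complex.exp S) := by
    have := hasProd_exp hS
    refine this.congr_fun fun k => ?_
    exact (Complex.exp_log (h (k + N))).symm
  have htail : ∏' k, f (k + N) = Complex.exp S := hprod.tprod_eq
  have hm : Multipliable (fun k => f (k + N)) := ⟨_, hprod⟩
  have hdecomp := Multipliable.prod_mul_tprod_nat_mul' (f := f) (k := N) hm
  rw [show qPochInf q x = ∏' k, f k from rfl, ← hdecomp, htail]
  exact mul_ne_zero (Finset.prod_ne_zero_iff.mpr fun i _ => h i) (Complex.exp_ne_zero S)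

/-- The functions `z ↦ θ_q(az)` and `z ↦ θ_q(-az)` are linearly independent over `ℂ`. -/
theorem thetaQ_twists_linearly_independent
    (q : ℂ) (hq0 : 0 < ‖q‖) (hq1 : ‖q‖ < 1)
    (a : ℂ) (ha : a ≠ 0) (A B : ℂ)
    (hrel : ∀ z : ℂ, z ≠ 0 → A * thetaQ q (a * z) + B * thetaQ q (-(a * z)) = 0) :
    A = 0 ∧ B = 0 := by
  -- θ_q(1) = 0
  have hθ1 : thetaQ q 1 = 0 := by
    have : qPochInf q 1 = 0 := tprod_eq_zero_of_factor 0 (by simp)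
    simp [thetaQ, this]
  -- θ_q(-1) ≠ 0
  have hqk : ∀ k : ℕ, 1 ≤ k → ‖q ^ k‖ < 1 := by
    intro k hk
    rw [norm_pow]
    exact pow_lt_one₀ (norm_nonneg q) hq1 (by omega)
  have h1 : qPochInf q q ≠ 0 := by
    apply qPochInf_ne_zero hq1
    intro k
    rw [sub_ne_zero]
    intro hcon
    have : ‖q ^ (k + 1)‖ < 1 := hqk (k + 1) (by omega)
    rw [pow_succ'] at this
    rw [show q * q ^ k = 1 from hcon.symm] at this
    simp at this
  have h2 : qPochInf q (-1) ≠ 0 := by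
    apply qPochInf_ne_zero hq1
    intro k
    rw [sub_ne_zero]
    intro hcon
    rcases Nat.eq_zero_or_pos k with hk | hk
    · simp [hk] at hcon
      exact (by norm_num : (1:ℂ) ≠ -1) hcon
    · have : ‖q ^ k‖ < 1 := hqk k hk
      have : ‖-1 * q ^ k‖ < 1 := by simpa using this
      rw [← hcon] at this
      simp at this
  have h3 : qPochInf q (-q) ≠ 0 := by
    apply qPochInf_ne_zero hq1
    intro k
    rw [sub_ne_zero]
    intro hcon
    have : ‖q ^ (k + 1)‖ < 1 := hqk (k + 1) (by omega)
    have h4 : ‖-q * q ^ k‖ < 1 := by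
      rw [pow_succ'] at this; simpa using this
    rw [← hcon] at h4
    simp at h4
  have hθm1 : thetaQ q (-1) ≠ 0 := by
    have : q / (-1) = -q := by ring
    rw [thetaQ, this]
    exact mul_ne_zero (mul_ne_zero h1 h2) h3
  constructor
  · have := hrel (-a⁻¹) (by simp [ha])
    rw [show a * -a⁻¹ = -1 by field_simp, neg_neg, hθ1] at this
    simp only [mul_zero, add_zero] at this
    exact (mul_eq_zero.mp this).resolve_right hθm1
  · have := hrel a⁻¹ (by simp [ha])
    rw [show a * a⁻¹ = 1 by field_simp, hθ1] at this
    simp only [mul_zero, zero_add] at this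
    exact (mul_eq_zero.mp this).resolve_right hθm1
end

section
/- Let V ⊆ ℂ be a nonempty connected open set and let f, g be holomorphic functions on V such that 0 < |g(z)| < 1 for all z ∈ V, g is nonconstant on V, and the function z ↦ f(z)/(1 − g(z)) is nonconstant on V. Suppose K ∈ ℂ[X,Y] is a polynomial in two variables such that for every integer n ≥ 0 and every z ∈ V, K( f(z)·(1 − g(z)ⁿ)/(1 − g(z)), g(z)ⁿ ) = 0. Then K = 0. -/
open Polynomial in
private lemma eval_mv_eval₂ (v : Fin 2 → Polynomial ℂ) (w : ℂ) (K : MvPolynomial (Fin 2) ℂ) :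
    (MvPolynomial.eval₂ Polynomial.C v K).eval w
      = MvPolynomial.eval (fun i => (v i).eval w) K := by
  have := MvPolynomial.eval₂_comp_left (Polynomial.evalRingHom w) Polynomial.C v K
  simp only [Polynomial.coe_evalRingHom] at this
  rw [this]
  have hcomp : (Polynomial.evalRingHom w).comp Polynomial.C = RingHom.id ℂ := by
    ext x; simp
  rw [hcomp, MvPolynomial.eval]
  rfl

/-- Key algebraic-independence step: if a two-variable polynomial `K` vanishes at all the
points `(f(z)(1 - g(z)ⁿ)/(1 - g(z)), g(z)ⁿ)` for `z` in a nonempty connected open set `V`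
and all `n ≥ 0`, where `f, g` are holomorphic, `0 < |g| < 1` on `V`, `g` is nonconstant,
and `f/(1-g)` is nonconstant, then `K = 0`. -/
theorem polynomial_vanishing_on_orbit_is_zero
    (V : Set ℂ) (hVne : V.Nonempty) (hVopen : IsOpen V) (hVconn : IsConnected V)
    (f g : ℂ → ℂ)
    (hf : DifferentiableOn ℂ f V) (hg : DifferentiableOn ℂ g V)
    (hg01 : ∀ z ∈ V, 0 < ‖g z‖ ∧ ‖g z‖ < 1)
    (hgnc : ¬ ∃ c : ℂ, ∀ z ∈ V, g z = c)
    (hfnc : ¬ ∃ c : ℂ, ∀ z ∈ V, f z / (1 - g z) = c)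
    (K : MvPolynomial (Fin 2) ℂ)
    (hK : ∀ n : ℕ, ∀ z ∈ V,
      MvPolynomial.eval ![f z * (1 - g z ^ n) / (1 - g z), g z ^ n] K = 0) :
    K = 0 := by
  set h : ℂ → ℂ := fun z => f z / (1 - g z) with hh
  have hgne1 : ∀ z ∈ V, (1 : ℂ) - g z ≠ 0 := by
    intro z hz hcontra
    have hg1 : g z = 1 := by linear_combination -hcontra
    have := (hg01 z hz).2
    rw [hg1] at this
    simp at this
  -- Step 1: for each z ∈ V and every w, K(h z * (1 - w), w) = 0
  have step1 : ∀ z ∈ V, ∀ w : ℂ, MvPolynomial.eval ![h z * (1 - w), w] K = 0 := by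
    intro z hz w
    set p : Polynomial ℂ :=
      MvPolynomial.eval₂ Polynomial.C
        ![Polynomial.C (h z) * (1 - Polynomial.X), Polynomial.X] K with hp
    have hpe : ∀ u : ℂ, p.eval u = MvPolynomial.eval ![h z * (1 - u), u] K := by
      intro u
      rw [hp, eval_mv_eval₂]
      have hvec : (fun i => Polynomial.eval u
          (![Polynomial.C (h z) * (1 - Polynomial.X), Polynomial.X] i))
          = ![h z * (1 - u), u] := by
        funext i; fin_cases i <;> simp
      rw [hvec]
    have hroots : ∀ n : ℕ, p.IsRoot (g z ^ n) := by
      intro n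
      have := hK n z hz
      have hdiv : f z * (1 - g z ^ n) / (1 - g z) = h z * (1 - g z ^ n) := by
        rw [hh]; field_simp
      rw [Polynomial.IsRoot.def, hpe]
      rw [hdiv] at this
      exact this
    have hinj : Function.Injective (fun n : ℕ => g z ^ n) := by
      intro m n hmn
      have habs : ‖g z‖ ^ m = ‖g z‖ ^ n := by
        simpa [norm_pow] using congrArg (fun x : ℂ => ‖x‖) hmn
      exact (pow_right_strictAnti₀ (hg01 z hz).1 (hg01 z hz).2).injective habs
    have hp0 : p = 0 := by
      apply Polynomial.eq_zero_of_infinite_isRoot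
      exact Set.Infinite.mono (fun u hu => by
          obtain ⟨n, rfl⟩ := hu; exact hroots n)
        (Set.infinite_range_of_injective hinj)
    have := hpe w
    rw [hp0] at this
    simpa using this.symm
  -- Step 2: h '' V is infinite
  have hhc : ContinuousOn h V := by
    exact ContinuousOn.div hf.continuousOn
      (continuousOn_const.sub hg.continuousOn) hgne1
  have himg : (h '' V).Infinite := by
    apply IsPreconnected.infinite_of_nontrivial (hVconn.isPreconnected.image h hhc)
    push_neg at hfnc
    obtain ⟨z₀, hz₀⟩ := hVne
    obtain ⟨z₁, hz₁, hne⟩ := hfnc (h z₀)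
    exact ⟨h z₁, ⟨z₁, hz₁, rfl⟩, h z₀, ⟨z₀, hz₀, rfl⟩, hne⟩
  -- Step 3: for every w ≠ 1 and every x, K(x, w) = 0
  have step3 : ∀ w : ℂ, w ≠ 1 → ∀ x : ℂ, MvPolynomial.eval ![x, w] K = 0 := by
    intro w hw x
    set q : Polynomial ℂ :=
      MvPolynomial.eval₂ Polynomial.C ![Polynomial.X, Polynomial.C w] K with hq
    have hqe : ∀ u : ℂ, q.eval u = MvPolynomial.eval ![u, w] K := by
      intro u
      rw [hq, eval_mv_eval₂]
      have hvec : (fun i => Polynomial.eval u (![Polynomial.X, Polynomial.C w] i))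
          = ![u, w] := by
        funext i; fin_cases i <;> simp
      rw [hvec]
    have hq0 : q = 0 := by
      apply Polynomial.eq_zero_of_infinite_isRoot
      have h1w : (1 : ℂ) - w ≠ 0 := fun hc => hw (by linear_combination -hc)
      have hinj2 : Function.Injective (fun a : ℂ => a * (1 - w)) :=
        fun a b hab => by
          exact mul_right_cancel₀ h1w hab
      apply Set.Infinite.mono (s := (fun a : ℂ => a * (1 - w)) '' (h '' V))
      · rintro u ⟨a, ⟨z, hz, rfl⟩, rfl⟩
        show q.IsRoot (h z * (1 - w))
        rw [Polynomial.IsRoot.def, hqe]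
        exact step1 z hz w
      · exact himg.image (hinj2.injOn)
    have := hqe x
    rw [hq0] at this
    simpa using this.symm
  -- Step 4: for every x and every w, K(x, w) = 0
  have step4 : ∀ x w : ℂ, MvPolynomial.eval ![x, w] K = 0 := by
    intro x w
    set r : Polynomial ℂ :=
      MvPolynomial.eval₂ Polynomial.C ![Polynomial.C x, Polynomial.X] K with hr
    have hre : ∀ u : ℂ, r.eval u = MvPolynomial.eval ![x, u] K := by
      intro u
      rw [hr, eval_mv_eval₂]
      have hvec : (fun i => Polynomial.eval u (![Polynomial.C x, Polynomial.X] i))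
          = ![x, u] := by
        funext i; fin_cases i <;> simp
      rw [hvec]
    have hr0 : r = 0 := by
      apply Polynomial.eq_zero_of_infinite_isRoot
      apply Set.Infinite.mono (s := {u : ℂ | u ≠ 1})
      · intro u hu
        rw [Set.mem_setOf_eq] at hu
        rw [Set.mem_setOf_eq, Polynomial.IsRoot.def, hre]
        exact step3 u hu x
      · exact Set.Finite.infinite_compl (Set.finite_singleton 1)
    have := hre w
    rw [hr0] at this
    simpa using this.symm
  -- Conclusion
  apply MvPolynomial.funext
  intro v
  have hv : v = ![v 0, v 1] := by
    funext i; fin_cases i <;> rfl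
  rw [hv]
  simpa using step4 (v 0) (v 1)
end
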